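/- arXiv:1510.05799 — 6 statements merged into one kernel-verified Lean document; each statement's English description precedes it below -/
import Mathlib

section
/- For all n ≥ 0 and k > 0, the restricted Stirling numbers of the second kind satisfy S≤m(n+1, k) = k · S≤m(n, k) + S≤m(n, k−1) − C(n, m) · S≤m(n−m, k−1), where the last term is taken to be 0 if n < m. -/
/-- Restricted Stirling number of the second kind: partitions of an `n`-set
into `k` blocks, each of size at most `m`. -/
noncomputable def restStirling (m n k : ℕ) : ℕ :=
  Nat.card {P : Finpartition (Finset.univ : Finset (Fin n)) //
    P.parts.card = k ∧ ∀ b ∈ P.parts, b.card ≤ m}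

/-- Associated Stirling number of the second kind: partitions of an `n`-set
into `k` blocks, each of size at least `m`. -/
noncomputable def assocStirling (m n k : ℕ) : ℕ :=
  Nat.card {P : Finpartition (Finset.univ : Finset (Fin n)) //
    P.parts.card = k ∧ ∀ b ∈ P.parts, m ≤ b.card}

/-- Ordinary Stirling number of the second kind. -/
noncomputable def ordStirling (n k : ℕ) : ℕ :=
  Nat.card {P : Finpartition (Finset.univ : Finset (Fin n)) // P.parts.card = k}


open Finset

variable {α β : Type*} [DecidableEq α] [DecidableEq β] {s : Finset α} {t : Finset β}

/-- Transport a finpartition along a map injective on the ground set. -/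
def Finpartition.mapImage (P : Finpartition s) (f : α → β) (g : β → α)
    (hst : s.image f = t) (hgf : ∀ x ∈ s, g (f x) = x) : Finpartition t where
  parts := P.parts.image (Finset.image f)
  supIndep := by
    have hinj : Set.InjOn f s := fun x hx y hy h => by
      rw [← hgf x hx, ← hgf y hy, h]
    rw [Finset.supIndep_iff_pairwiseDisjoint]
    rintro c1 hc1 c2 hc2 hne
    simp only [coe_image, Set.mem_image, mem_coe] at hc1 hc2
    obtain ⟨b1, hb1, rfl⟩ := hc1
    obtain ⟨b2, hb2, rfl⟩ := hc2
    have hbne : b1 ≠ b2 := by rintro rfl; exact hne rfl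
    have hd : Disjoint b1 b2 := P.disjoint hb1 hb2 hbne
    show Disjoint (b1.image f) (b2.image f)
    rw [Finset.disjoint_left]
    rintro y hy1 hy2
    simp only [Finset.mem_image] at hy1 hy2
    obtain ⟨x1, hx1, rfl⟩ := hy1
    obtain ⟨x2, hx2, hx⟩ := hy2
    have e : x2 = x1 := hinj (P.le hb2 hx2) (P.le hb1 hx1) hx
    subst e
    exact (Finset.disjoint_left.1 hd hx1) hx2
  sup_parts := by
    subst hst
    ext y
    rw [Finset.mem_sup]
    simp only [Finset.mem_image, id_eq]
    constructor
    · rintro ⟨c, hc, hy⟩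
      obtain ⟨b, hb, rfl⟩ := hc
      rw [Finset.mem_image] at hy
      obtain ⟨x, hx, rfl⟩ := hy
      exact ⟨x, P.le hb hx, rfl⟩
    · rintro ⟨x, hx, rfl⟩
      have hx' := hx
      rw [← P.sup_parts, Finset.mem_sup] at hx'
      obtain ⟨b, hb, hxb⟩ := hx'
      exact ⟨b.image f, ⟨b, hb, rfl⟩, Finset.mem_image_of_mem f hxb⟩
  bot_notMem := by
    simp only [Finset.bot_eq_empty, Finset.mem_image]
    rintro ⟨b, hb, hbe⟩
    rw [Finset.image_eq_empty] at hbe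
    subst hbe; exact P.bot_notMem hb

lemma Finpartition.mapImage_parts (P : Finpartition s) (f : α → β) (g : β → α)
    (hst : s.image f = t) (hgf : ∀ x ∈ s, g (f x) = x) :
    (P.mapImage f g hst hgf).parts = P.parts.image (Finset.image f) := rfl

lemma image_image_cancel {f : α → β} {g : β → α} (hgf : ∀ x ∈ s, g (f x) = x)
    {b : Finset α} (hb : b ⊆ s) : (b.image f).image g = b := by
  rw [Finset.image_image]
  rw [Finset.image_congr (g := id), Finset.image_id]
  intro x hx
  exact hgf x (hb hx)

lemma Finpartition.mapImage_mapImage (P : Finpartition s) (f : α → β) (g : β → α)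
    (hst : s.image f = t) (hgf : ∀ x ∈ s, g (f x) = x)
    (hts : t.image g = s) (hfg : ∀ y ∈ t, f (g y) = y) :
    (P.mapImage f g hst hgf).mapImage g f hts hfg = P := by
  apply Finpartition.ext
  ext b
  rw [Finpartition.mapImage_parts, Finpartition.mapImage_parts, Finset.image_image]
  constructor
  · rintro h
    rw [Finset.mem_image] at h
    obtain ⟨c, hc, rfl⟩ := h
    have : (Finset.image g ∘ Finset.image f) c = c :=
      image_image_cancel hgf (P.le hc)
    rwa [this]
  · intro hb
    rw [Finset.mem_image]
    exact ⟨b, hb, image_image_cancel hgf (P.le hb)⟩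

lemma finpartition_empty_eq (P Q : Finpartition (∅ : Finset α)) : P = Q := by
  apply Finpartition.ext
  rw [Finpartition.parts_eq_empty_iff.2 Finset.bot_eq_empty.symm,
    Finpartition.parts_eq_empty_iff.2 Finset.bot_eq_empty.symm]

/-- Count of partitions of `s` into `k` parts of size at most `m`. -/
noncomputable def RS (m k : ℕ) (s : Finset α) : ℕ :=
  Nat.card {P : Finpartition s // P.parts.card = k ∧ ∀ b ∈ P.parts, b.card ≤ m}

lemma mapImage_cond (m k : ℕ) (P : Finpartition s) (f : α → β) (g : β → α)
    (hst : s.image f = t) (hgf : ∀ x ∈ s, g (f x) = x)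
    (h : P.parts.card = k ∧ ∀ b ∈ P.parts, b.card ≤ m) :
    (P.mapImage f g hst hgf).parts.card = k ∧
      ∀ b ∈ (P.mapImage f g hst hgf).parts, b.card ≤ m := by
  have hinjparts : Set.InjOn (Finset.image f) P.parts := by
    intro b1 hb1 b2 hb2 hb
    rw [← image_image_cancel hgf (P.le hb1), hb, image_image_cancel hgf (P.le hb2)]
  constructor
  · rw [Finpartition.mapImage_parts, Finset.card_image_of_injOn hinjparts, h.1]
  · intro b hb
    rw [Finpartition.mapImage_parts, Finset.mem_image] at hb
    obtain ⟨c, hc, rfl⟩ := hb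
    rw [Finset.card_image_of_injOn]
    · exact h.2 c hc
    · intro x hx y hy hxy
      rw [← hgf x (P.le hc hx), hxy, hgf y (P.le hc hy)]

lemma RS_congr_aux (m k : ℕ) (f : α → β) (g : β → α)
    (hst : s.image f = t) (hgf : ∀ x ∈ s, g (f x) = x)
    (hts : t.image g = s) (hfg : ∀ y ∈ t, f (g y) = y) :
    RS m k s = RS m k t := by
  refine Nat.card_congr ⟨fun P => ⟨P.1.mapImage f g hst hgf, mapImage_cond m k P.1 f g hst hgf P.2⟩,
    fun Q => ⟨Q.1.mapImage g f hts hfg, mapImage_cond m k Q.1 g f hts hfg Q.2⟩, ?_, ?_⟩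
  · rintro ⟨P, hP⟩
    exact Subtype.ext (P.mapImage_mapImage f g hst hgf hts hfg)
  · rintro ⟨Q, hQ⟩
    exact Subtype.ext (Q.mapImage_mapImage g f hts hfg hst hgf)

lemma RS_congr (m k : ℕ) (h : s.card = t.card) : RS m k s = RS m k t := by
  rcases s.eq_empty_or_nonempty with rfl | hs
  · have ht : t = ∅ := by
      rwa [Finset.card_empty, eq_comm, Finset.card_eq_zero] at h
    subst ht
    unfold RS
    refine Nat.card_congr ⟨fun P => ⟨⊥, ?_, by simp⟩, fun Q => ⟨⊥, ?_, by simp⟩, ?_, ?_⟩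
    · obtain ⟨P, h1, _⟩ := P
      rw [Finpartition.card_bot, Finset.card_empty]
      rw [← h1, finpartition_empty_eq P ⊥, Finpartition.card_bot, Finset.card_empty]
    · obtain ⟨Q, h1, _⟩ := Q
      rw [Finpartition.card_bot, Finset.card_empty]
      rw [← h1, finpartition_empty_eq Q ⊥, Finpartition.card_bot, Finset.card_empty]
    · rintro ⟨P, hP⟩
      exact Subtype.ext (finpartition_empty_eq _ _)
    · rintro ⟨Q, hQ⟩
      exact Subtype.ext (finpartition_empty_eq _ _)
  · have ht : t.Nonempty := by
      rwa [← Finset.card_pos, ← h, Finset.card_pos]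
    have e : (↥s) ≃ (↥t) := Fintype.equivOfCardEq (by simp [h])
    classical
    set f : α → β := fun x => if hx : x ∈ s then (e ⟨x, hx⟩ : β) else (ht.choose : β) with hf
    set g : β → α := fun y => if hy : y ∈ t then (e.symm ⟨y, hy⟩ : α) else (hs.choose : α) with hg
    have hfs : ∀ x (hx : x ∈ s), f x = (e ⟨x, hx⟩ : β) := fun x hx => dif_pos hx
    have hgt : ∀ y (hy : y ∈ t), g y = (e.symm ⟨y, hy⟩ : α) := fun y hy => dif_pos hy
    have hgf : ∀ x ∈ s, g (f x) = x := by
      intro x hx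
      rw [hfs x hx, hgt _ (e ⟨x, hx⟩).2]
      simp
    have hfg : ∀ y ∈ t, f (g y) = y := by
      intro y hy
      rw [hgt y hy, hfs _ (e.symm ⟨y, hy⟩).2]
      simp
    have hst : s.image f = t := by
      apply Finset.eq_of_subset_of_card_le
      · intro y hy
        rw [Finset.mem_image] at hy
        obtain ⟨x, hx, rfl⟩ := hy
        rw [hfs x hx]
        exact (e ⟨x, hx⟩).2
      · rw [Finset.card_image_of_injOn fun x hx y hy hxy => by
          rw [← hgf x hx, hxy, hgf y hy], h]
    have hts : t.image g = s := by
      apply Finset.eq_of_subset_of_card_le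
      · intro x hx
        rw [Finset.mem_image] at hx
        obtain ⟨y, hy, rfl⟩ := hx
        rw [hgt y hy]
        exact (e.symm ⟨y, hy⟩).2
      · rw [Finset.card_image_of_injOn fun x hx y hy hxy => by
          rw [← hfg x hx, hxy, hfg y hy], h]
    exact RS_congr_aux m k f g hst hgf hts hfg
variable {α : Type*} [DecidableEq α] {s : Finset α} {a : α}

lemma Finpartition.avoid_parts_of_mem (Q : Finpartition s) {B : Finset α} (hB : B ∈ Q.parts) :
    (Q.avoid B).parts = Q.parts.erase B := by
  ext c
  rw [Finpartition.mem_avoid, Finset.mem_erase]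
  constructor
  · rintro ⟨d, hd, hdB, rfl⟩
    have hne : d ≠ B := by rintro rfl; exact hdB le_rfl
    have hdisj : Disjoint d B := Q.disjoint hd hB hne
    rw [Finset.sdiff_eq_self_of_disjoint hdisj]
    exact ⟨hne, hd⟩
  · rintro ⟨hne, hc⟩
    have hdisj : Disjoint c B := Q.disjoint hc hB hne
    refine ⟨c, hc, ?_, Finset.sdiff_eq_self_of_disjoint hdisj⟩
    intro hle
    obtain ⟨x, hx⟩ := Q.nonempty_of_mem_parts hc
    exact (Finset.disjoint_left.1 hdisj hx) (hle hx)

/-- Remove the element `a` from a finpartition of `s`. -/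
def Finpartition.eraseElem (P : Finpartition s) (a : α) : Finpartition (s.erase a) :=
  (P.avoid {a}).copy (Finset.sdiff_singleton_eq_erase a s)

lemma Finpartition.mem_eraseElem (P : Finpartition s) {c : Finset α} :
    c ∈ (P.eraseElem a).parts ↔ ∃ d ∈ P.parts, ¬d ⊆ {a} ∧ d.erase a = c := by
  rw [Finpartition.eraseElem]
  show c ∈ (P.avoid {a}).parts ↔ _
  rw [Finpartition.mem_avoid]
  simp only [← Finset.sdiff_singleton_eq_erase]

lemma Finpartition.eraseElem_parts_of_singleton (P : Finpartition s) (ha : a ∈ s)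
    (h : P.part a = {a}) : (P.eraseElem a).parts = P.parts.erase {a} := by
  ext c
  rw [Finpartition.mem_eraseElem, Finset.mem_erase]
  constructor
  · rintro ⟨d, hd, hda, rfl⟩
    have had : a ∉ d := by
      intro had
      exact hda ((P.part_eq_of_mem hd had ▸ h) ▸ Finset.Subset.refl _)
    rw [Finset.erase_eq_of_notMem had]
    refine ⟨?_, hd⟩
    rintro rfl
    exact had (Finset.mem_singleton_self a)
  · rintro ⟨hne, hc⟩
    have hac : a ∉ c := by
      intro hac
      exact hne ((P.part_eq_of_mem hc hac).symm.trans h)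
    refine ⟨c, hc, ?_, Finset.erase_eq_of_notMem hac⟩
    intro hle
    obtain ⟨x, hx⟩ := P.nonempty_of_mem_parts hc
    have : x = a := Finset.mem_singleton.1 (hle hx)
    exact hac (this ▸ hx)

lemma Finpartition.eraseElem_parts_of_ne (P : Finpartition s) (ha : a ∈ s)
    (h : P.part a ≠ {a}) :
    (P.eraseElem a).parts = insert ((P.part a).erase a) (P.parts.erase (P.part a)) := by
  have hmem : a ∈ P.part a := P.mem_part ha
  have hpmem : P.part a ∈ P.parts := P.part_mem.2 ha
  have hne : ((P.part a).erase a).Nonempty := by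
    rcases Finset.eq_empty_or_nonempty ((P.part a).erase a) with he | hne
    · exfalso
      apply h
      apply Finset.eq_singleton_iff_unique_mem.2 ⟨hmem, fun x hx => ?_⟩
      by_contra hxa
      exact Finset.notMem_empty x (he ▸ Finset.mem_erase.2 ⟨hxa, hx⟩)
    · exact hne
  ext c
  rw [Finpartition.mem_eraseElem, Finset.mem_insert, Finset.mem_erase]
  constructor
  · rintro ⟨d, hd, hda, rfl⟩
    by_cases hdp : d = P.part a
    · exact Or.inl (by rw [hdp])
    · have had : a ∉ d := fun had => hdp (P.part_eq_of_mem hd had).symm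
      rw [Finset.erase_eq_of_notMem had]
      exact Or.inr ⟨hdp, hd⟩
  · rintro (rfl | ⟨hcp, hc⟩)
    · refine ⟨P.part a, hpmem, ?_, rfl⟩
      intro hle
      obtain ⟨x, hx⟩ := hne
      rw [Finset.mem_erase] at hx
      exact hx.1 (Finset.mem_singleton.1 (hle hx.2))
    · have hac : a ∉ c := fun hac => hcp (P.part_eq_of_mem hc hac).symm
      refine ⟨c, hc, ?_, Finset.erase_eq_of_notMem hac⟩
      intro hle
      obtain ⟨x, hx⟩ := P.nonempty_of_mem_parts hc
      have : x = a := Finset.mem_singleton.1 (hle hx)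
      exact hac (this ▸ hx)

/-- Add `a` to a finpartition of `s.erase a` as a new singleton part. -/
def Finpartition.addSingleton (Q : Finpartition (s.erase a)) (ha : a ∈ s) : Finpartition s :=
  Q.extend (b := {a}) (by simp [Finset.bot_eq_empty])
    (Finset.disjoint_singleton_right.2 (Finset.notMem_erase a s))
    (by rw [Finset.sup_eq_union, Finset.union_comm, ← Finset.insert_eq, Finset.insert_erase ha])

lemma Finpartition.addSingleton_parts (Q : Finpartition (s.erase a)) (ha : a ∈ s) :
    (Q.addSingleton ha).parts = insert {a} Q.parts := rfl

/-- Add `a` to an existing part `B` of a finpartition of `s.erase a`. -/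
def Finpartition.addToBlock (Q : Finpartition (s.erase a)) (ha : a ∈ s) {B : Finset α}
    (hB : B ∈ Q.parts) : Finpartition s :=
  (Q.avoid B).extend (b := insert a B)
    (by simp [Finset.bot_eq_empty, Finset.insert_ne_empty])
    (by
      rw [Finset.disjoint_left]
      intro x hx hx'
      rw [Finset.mem_sdiff, Finset.mem_erase] at hx
      rcases Finset.mem_insert.1 hx' with rfl | hxB
      · exact hx.1.1 rfl
      · exact hx.2 hxB)
    (by
      have hBs : B ⊆ s.erase a := Q.le hB
      rw [Finset.sup_eq_union]
      ext x
      simp only [Finset.mem_union, Finset.mem_sdiff, Finset.mem_erase, Finset.mem_insert]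
      constructor
      · rintro (⟨⟨_, hx⟩, _⟩ | (rfl | hxB))
        · exact hx
        · exact ha
        · exact Finset.mem_of_mem_erase (hBs hxB)
      · intro hx
        by_cases hxa : x = a
        · exact Or.inr (Or.inl hxa)
        · by_cases hxB : x ∈ B
          · exact Or.inr (Or.inr hxB)
          · exact Or.inl ⟨⟨hxa, hx⟩, hxB⟩)

lemma Finpartition.addToBlock_parts (Q : Finpartition (s.erase a)) (ha : a ∈ s) {B : Finset α}
    (hB : B ∈ Q.parts) :
    (Q.addToBlock ha hB).parts = insert (insert a B) (Q.parts.erase B) := by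
  rw [Finpartition.addToBlock]
  show insert (insert a B) (Q.avoid B).parts = _
  rw [Q.avoid_parts_of_mem hB]

section Main
variable {a : α}

lemma not_mem_of_part (Q : Finpartition (s.erase a)) {b : Finset α} (hb : b ∈ Q.parts) :
    a ∉ b := fun ha => Finset.notMem_erase a s (Q.le hb ha)

lemma part_erase_nonempty (P : Finpartition s) (ha : a ∈ s) (h : P.part a ≠ {a}) :
    ((P.part a).erase a).Nonempty := by
  rcases Finset.eq_empty_or_nonempty ((P.part a).erase a) with he | hne
  · exfalso
    apply h
    apply Finset.eq_singleton_iff_unique_mem.2 ⟨P.mem_part ha, fun x hx => ?_⟩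
    by_contra hxa
    exact Finset.notMem_empty x (he ▸ Finset.mem_erase.2 ⟨hxa, hx⟩)
  · exact hne

lemma erase_part_not_mem (P : Finpartition s) (ha : a ∈ s) (h : P.part a ≠ {a}) :
    (P.part a).erase a ∉ P.parts.erase (P.part a) := by
  intro hmem
  rw [Finset.mem_erase] at hmem
  have hdisj := P.disjoint hmem.2 (P.part_mem.2 ha) hmem.1
  obtain ⟨x, hx⟩ := part_erase_nonempty P ha h
  exact Finset.disjoint_left.1 hdisj hx (Finset.mem_of_mem_erase hx)

/-- Partitions of `s` into `k` parts of size at most `m`. -/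
abbrev PartA (m k : ℕ) (s : Finset α) : Type _ :=
  {P : Finpartition s // P.parts.card = k ∧ ∀ b ∈ P.parts, b.card ≤ m}

/-- Partitions of `s` into `k` parts of size at most `m`, with a marked part whose
cardinality satisfies `p`. -/
abbrev PairX (m k : ℕ) (s : Finset α) (p : ℕ → Prop) : Type _ :=
  {x : Finpartition s × Finset α //
    x.1.parts.card = k ∧ (∀ b ∈ x.1.parts, b.card ≤ m) ∧ x.2 ∈ x.1.parts ∧ p x.2.card}

lemma RS_eq_card_PartA (m k : ℕ) (s : Finset α) : RS m k s = Nat.card (PartA m k s) := rfl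

/-- Forward map: remove `a` from a partition of `s`. -/
def fwd (m k : ℕ) (ha : a ∈ s) (x : PartA m k s) :
    PartA m (k - 1) (s.erase a) ⊕ PairX m k (s.erase a) (· < m) :=
  if h : x.1.part a = {a} then
    Sum.inl ⟨x.1.eraseElem a, by
      rw [Finpartition.eraseElem_parts_of_singleton _ ha h,
        Finset.card_erase_of_mem (h ▸ x.1.part_mem.2 ha), x.2.1], by
      intro b hb
      rw [Finpartition.eraseElem_parts_of_singleton _ ha h] at hb
      exact x.2.2 b (Finset.mem_of_mem_erase hb)⟩
  else
    Sum.inr ⟨(x.1.eraseElem a, (x.1.part a).erase a), by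
      constructor
      · rw [Finpartition.eraseElem_parts_of_ne _ ha h,
          Finset.card_insert_of_notMem (erase_part_not_mem x.1 ha h),
          Finset.card_erase_of_mem (x.1.part_mem.2 ha), x.2.1]
        have hk1 : 1 ≤ k := by
          rw [← x.2.1]
          exact Finset.card_pos.2 ⟨x.1.part a, x.1.part_mem.2 ha⟩
        omega
      refine ⟨?_, ?_, ?_⟩
      · intro b hb
        rw [Finpartition.eraseElem_parts_of_ne _ ha h, Finset.mem_insert] at hb
        rcases hb with rfl | hb
        · exact le_trans (Finset.card_erase_le) (x.2.2 _ (x.1.part_mem.2 ha))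
        · exact x.2.2 b (Finset.mem_of_mem_erase hb)
      · rw [Finpartition.eraseElem_parts_of_ne _ ha h]
        exact Finset.mem_insert_self _ _
      · show ((x.1.part a).erase a).card < m
        rw [Finset.card_erase_of_mem (x.1.mem_part ha)]
        have h1 : 1 ≤ (x.1.part a).card := Finset.card_pos.2 ⟨a, x.1.mem_part ha⟩
        have h2 := x.2.2 _ (x.1.part_mem.2 ha)
        omega⟩

/-- Backward map: add `a` back. -/
def bwd (m k : ℕ) (hm : 1 ≤ m) (hk : 1 ≤ k) (ha : a ∈ s)
    (y : PartA m (k - 1) (s.erase a) ⊕ PairX m k (s.erase a) (· < m)) : PartA m k s := by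
  refine y.elim (fun q => ⟨q.1.addSingleton ha, ?_, ?_⟩)
    (fun x => ⟨x.1.1.addToBlock ha x.2.2.2.1, ?_, ?_⟩)
  · rw [Finpartition.addSingleton_parts, Finset.card_insert_of_notMem, q.2.1]
    · omega
    · intro hmem
      exact Finset.notMem_erase a s (q.1.le hmem (Finset.mem_singleton_self a))
  · intro b hb
    rw [Finpartition.addSingleton_parts, Finset.mem_insert] at hb
    rcases hb with rfl | hb
    · simpa using hm
    · exact q.2.2 b hb
  · rw [Finpartition.addToBlock_parts, Finset.card_insert_of_notMem, Finset.card_erase_of_mem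
      x.2.2.2.1, x.2.1]
    · have hk1 : 1 ≤ k := by
        rw [← x.2.1]
        exact Finset.card_pos.2 ⟨x.1.2, x.2.2.2.1⟩
      omega
    · intro hmem
      exact not_mem_of_part x.1.1 (Finset.mem_of_mem_erase hmem) (Finset.mem_insert_self a _)
  · intro b hb
    rw [Finpartition.addToBlock_parts, Finset.mem_insert] at hb
    rcases hb with rfl | hb
    · rw [Finset.card_insert_of_notMem (not_mem_of_part x.1.1 x.2.2.2.1)]
      have := x.2.2.2.2
      omega
    · exact x.2.2.1 b (Finset.mem_of_mem_erase hb)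

lemma bwd_fwd (m k : ℕ) (hm : 1 ≤ m) (hk : 1 ≤ k) (ha : a ∈ s) (x : PartA m k s) :
    bwd m k hm hk ha (fwd m k ha x) = x := by
  by_cases h : x.1.part a = {a}
  · rw [fwd, dif_pos h]
    unfold bwd
    rw [Sum.elim_inl]
    apply Subtype.ext
    dsimp only
    apply Finpartition.ext
    rw [Finpartition.addSingleton_parts, Finpartition.eraseElem_parts_of_singleton _ ha h,
      Finset.insert_erase (h ▸ x.1.part_mem.2 ha)]
  · rw [fwd, dif_neg h]
    unfold bwd
    rw [Sum.elim_inr]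
    apply Subtype.ext
    dsimp only
    apply Finpartition.ext
    rw [Finpartition.addToBlock_parts, Finpartition.eraseElem_parts_of_ne _ ha h,
      Finset.erase_insert (erase_part_not_mem x.1 ha h),
      Finset.insert_erase (x.1.mem_part ha), Finset.insert_erase (x.1.part_mem.2 ha)]

lemma fwd_bwd (m k : ℕ) (hm : 1 ≤ m) (hk : 1 ≤ k) (ha : a ∈ s)
    (y : PartA m (k - 1) (s.erase a) ⊕ PairX m k (s.erase a) (· < m)) :
    fwd m k ha (bwd m k hm hk ha y) = y := by
  rcases y with q | x
  · have hpart : (q.1.addSingleton ha).part a = {a} := by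
      apply Finpartition.part_eq_of_mem
      · rw [Finpartition.addSingleton_parts]
        exact Finset.mem_insert_self _ _
      · exact Finset.mem_singleton_self a
    unfold bwd
    rw [Sum.elim_inl]
    rw [fwd]
    rw [dif_pos hpart]
    congr 1
    apply Subtype.ext
    apply Finpartition.ext
    rw [Finpartition.eraseElem_parts_of_singleton _ ha hpart,
      Finpartition.addSingleton_parts, Finset.erase_insert]
    intro hmem
    exact Finset.notMem_erase a s (q.1.le hmem (Finset.mem_singleton_self a))
  · have hmem : x.1.2 ∈ x.1.1.parts := x.2.2.2.1
    have haB : a ∉ x.1.2 := not_mem_of_part x.1.1 hmem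
    have hpart : (x.1.1.addToBlock ha hmem).part a = insert a x.1.2 := by
      apply Finpartition.part_eq_of_mem
      · rw [Finpartition.addToBlock_parts]
        exact Finset.mem_insert_self _ _
      · exact Finset.mem_insert_self a _
    have hne : (x.1.1.addToBlock ha hmem).part a ≠ {a} := by
      rw [hpart]
      intro he
      obtain ⟨z, hz⟩ := x.1.1.nonempty_of_mem_parts hmem
      have : z ∈ ({a} : Finset α) := he ▸ Finset.mem_insert_of_mem hz
      rw [Finset.mem_singleton] at this
      exact haB (this ▸ hz)
    unfold bwd
    rw [Sum.elim_inr]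
    rw [fwd]
    rw [dif_neg hne]
    congr 1
    have hB : ((x.1.1.addToBlock ha hmem).part a).erase a = x.1.2 := by
      rw [hpart, Finset.erase_insert haB]
    apply Subtype.ext
    dsimp only
    have hQ : (x.1.1.addToBlock ha hmem).eraseElem a = x.1.1 := by
      apply Finpartition.ext
      rw [Finpartition.eraseElem_parts_of_ne _ ha hne, hB, hpart,
        Finpartition.addToBlock_parts, Finset.erase_insert, Finset.insert_erase hmem]
      intro hmem'
      exact not_mem_of_part x.1.1 (Finset.mem_of_mem_erase hmem') (Finset.mem_insert_self a _)
    rw [Prod.ext_iff]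
    exact ⟨hQ, hB⟩

lemma card_split (m k : ℕ) [Fintype α] (hm : 1 ≤ m) (hk : 1 ≤ k) (ha : a ∈ s) :
    Nat.card (PartA m k s) =
      Nat.card (PartA m (k - 1) (s.erase a)) + Nat.card (PairX m k (s.erase a) (· < m)) := by
  rw [← Nat.card_sum]
  exact Nat.card_congr ⟨fwd m k ha, bwd m k hm hk ha, bwd_fwd m k hm hk ha, fwd_bwd m k hm hk ha⟩

lemma card_pairX_split (m k : ℕ) [Fintype α] (t : Finset α) :
    Nat.card (PairX m k t (fun _ => True)) =
      Nat.card (PairX m k t (· < m)) + Nat.card (PairX m k t (· = m)) := by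
  rw [← Nat.card_sum]
  refine Nat.card_congr ⟨fun x => if h : x.1.2.card < m then Sum.inl ⟨x.1, x.2.1, x.2.2.1, x.2.2.2.1, h⟩
    else Sum.inr ⟨x.1, x.2.1, x.2.2.1, x.2.2.2.1, le_antisymm (x.2.2.1 _ x.2.2.2.1) (not_lt.1 h)⟩,
    fun y => y.elim (fun x => ⟨x.1, x.2.1, x.2.2.1, x.2.2.2.1, trivial⟩)
      (fun x => ⟨x.1, x.2.1, x.2.2.1, x.2.2.2.1, trivial⟩), ?_, ?_⟩
  · intro x
    dsimp only
    by_cases h : x.1.2.card < m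
    · rw [dif_pos h, Sum.elim_inl]
    · rw [dif_neg h, Sum.elim_inr]
  · rintro (x | x)
    · dsimp only
      rw [Sum.elim_inl, dif_pos x.2.2.2.2]
    · dsimp only
      rw [Sum.elim_inr, dif_neg (by rw [x.2.2.2.2]; exact lt_irrefl m)]

lemma card_sigma_const {ι : Type*} [Finite ι] {f : ι → Type*} [∀ i, Finite (f i)] (c : ℕ)
    (h : ∀ i, Nat.card (f i) = c) : Nat.card (Σ i, f i) = Nat.card ι * c := by
  cases nonempty_fintype ι
  haveI : ∀ i, Fintype (f i) := fun i => Fintype.ofFinite _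
  rw [Nat.card_eq_fintype_card, Nat.card_eq_fintype_card, Fintype.card_sigma,
    Finset.sum_congr rfl (fun i _ => by rw [← Nat.card_eq_fintype_card, h i]),
    Finset.sum_const, Finset.card_univ, smul_eq_mul]

lemma card_pairX_all (m k : ℕ) [Fintype α] (t : Finset α) :
    Nat.card (PairX m k t (fun _ => True)) = k * Nat.card (PartA m k t) := by
  have e : PairX m k t (fun _ => True) ≃ Σ P : PartA m k t, {B // B ∈ P.1.parts} :=
    ⟨fun x => ⟨⟨x.1.1, x.2.1, x.2.2.1⟩, ⟨x.1.2, x.2.2.2.1⟩⟩,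
     fun y => ⟨(y.1.1, y.2.1), y.1.2.1, y.1.2.2, y.2.2, trivial⟩,
     fun x => rfl, fun y => rfl⟩
  rw [Nat.card_congr e, card_sigma_const k (fun P => by
    rw [Nat.card_eq_finsetCard, P.2.1]), mul_comm]

end Main


lemma RS_univ_fin (m k n : ℕ) : RS m k (Finset.univ : Finset (Fin n)) = restStirling m n k := rfl

lemma RS_eq_restStirling (m k : ℕ) (s : Finset α) : RS m k s = restStirling m s.card k := by
  rw [← RS_univ_fin]
  exact RS_congr m k (by simp)

lemma card_PartA_eq (m k : ℕ) (s : Finset α) :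
    Nat.card (PartA m k s) = restStirling m s.card k :=
  (RS_eq_card_PartA m k s).symm.trans (RS_eq_restStirling m k s)

lemma card_pairX_eqm (m k : ℕ) [Fintype α] (hm : 1 ≤ m) (hk : 1 ≤ k) (t : Finset α) :
    Nat.card (PairX m k t (· = m)) =
      t.card.choose m * restStirling m (t.card - m) (k - 1) := by
  have hBne : ∀ B : {B // B ∈ t.powersetCard m}, (B : Finset α) ≠ ⊥ := by
    intro B h
    have hcard := (Finset.mem_powersetCard.1 B.2).2
    rw [Finset.bot_eq_empty] at h
    rw [h, Finset.card_empty] at hcard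
    omega
  have hBt : ∀ B : {B // B ∈ t.powersetCard m}, (B : Finset α) ⊆ t := fun B =>
    (Finset.mem_powersetCard.1 B.2).1
  have hBm : ∀ B : {B // B ∈ t.powersetCard m}, (B : Finset α).card = m := fun B =>
    (Finset.mem_powersetCard.1 B.2).2
  have hnotmem : ∀ (B : {B // B ∈ t.powersetCard m}) (R : Finpartition (t \ (B : Finset α))),
      (B : Finset α) ∉ R.parts := by
    intro B R hmem
    obtain ⟨x, hx⟩ := Finset.nonempty_iff_ne_empty.2 (by simpa [Finset.bot_eq_empty] using hBne B)
    exact (Finset.mem_sdiff.1 (R.le hmem hx)).2 hx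
  have e : PairX m k t (· = m) ≃
      Σ B : {B // B ∈ t.powersetCard m}, PartA m (k - 1) (t \ (B : Finset α)) := by
    refine ⟨fun x => ⟨⟨x.1.2, Finset.mem_powersetCard.2 ⟨x.1.1.le x.2.2.2.1, x.2.2.2.2⟩⟩,
      ⟨x.1.1.avoid x.1.2, ?_, ?_⟩⟩,
      fun y => ⟨(y.2.1.extend (hBne y.1) Finset.sdiff_disjoint
        (sdiff_sup_cancel (hBt y.1)), (y.1 : Finset α)), ?_, ?_, ?_, hBm y.1⟩, ?_, ?_⟩
    · rw [Finpartition.avoid_parts_of_mem _ x.2.2.2.1,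
        Finset.card_erase_of_mem x.2.2.2.1, x.2.1]
    · intro b hb
      rw [Finpartition.avoid_parts_of_mem _ x.2.2.2.1] at hb
      exact x.2.2.1 b (Finset.mem_of_mem_erase hb)
    · rw [Finpartition.extend_parts,
        Finset.card_insert_of_notMem (hnotmem y.1 y.2.1), y.2.2.1]
      omega
    · intro b hb
      rw [Finpartition.extend_parts, Finset.mem_insert] at hb
      rcases hb with rfl | hb
      · exact le_of_eq (hBm y.1)
      · exact y.2.2.2 b hb
    · rw [Finpartition.extend_parts]
      exact Finset.mem_insert_self _ _
    · intro x
      apply Subtype.ext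
      dsimp only
      rw [Prod.ext_iff]
      refine ⟨?_, rfl⟩
      apply Finpartition.ext
      rw [Finpartition.extend_parts, Finpartition.avoid_parts_of_mem _ x.2.2.2.1,
        Finset.insert_erase x.2.2.2.1]
    · intro y
      refine Sigma.ext rfl (heq_of_eq (Subtype.ext ?_))
      apply Finpartition.ext
      dsimp only
      rw [Finpartition.avoid_parts_of_mem _ (Finset.mem_insert_self _ _),
        Finpartition.extend_parts, Finset.erase_insert (hnotmem y.1 y.2.1)]
  rw [Nat.card_congr e, card_sigma_const (restStirling m (t.card - m) (k - 1)) (fun B => by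
    rw [card_PartA_eq, Finset.card_sdiff_of_subset (hBt B), hBm B]),
    Nat.card_eq_finsetCard, Finset.card_powersetCard]

theorem restStirling_recurrence (m : ℕ) (hm : 1 ≤ m) (n k : ℕ) (hk : 0 < k) :
    (restStirling m (n + 1) k : ℤ) =
      k * restStirling m n k + restStirling m n (k - 1)
        - n.choose m * restStirling m (n - m) (k - 1) := by
  classical
  set a : Fin (n + 1) := ⟨0, Nat.succ_pos n⟩ with ha
  set t : Finset (Fin (n + 1)) := Finset.univ.erase a with htdef
  have ht : t.card = n := by
    rw [htdef, Finset.card_erase_of_mem (Finset.mem_univ a)]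
    simp
  have h0 := card_PartA_eq m k (Finset.univ : Finset (Fin (n + 1)))
  rw [show (Finset.univ : Finset (Fin (n + 1))).card = n + 1 by simp] at h0
  have hsplit := card_split m k hm hk (Finset.mem_univ a)
  have hA1 := card_PartA_eq m (k - 1) t
  rw [ht] at hA1
  have hAk := card_PartA_eq m k t
  rw [ht] at hAk
  have hall := card_pairX_all m k t
  have hspl2 := card_pairX_split m k t
  have heqm := card_pairX_eqm m k hm hk t
  rw [ht] at heqm
  have hnat : restStirling m (n + 1) k + Nat.card (PairX m k t (· = m)) =
      restStirling m n (k - 1) + k * restStirling m n k := by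
    rw [← h0, hsplit, hA1, add_assoc, ← hspl2, hall, hAk]
  have hZ : (restStirling m (n + 1) k : ℤ) + (Nat.card (PairX m k t (· = m)) : ℤ) =
      (restStirling m n (k - 1) : ℤ) + (k : ℤ) * (restStirling m n k : ℤ) := by
    exact_mod_cast congrArg (Nat.cast : ℕ → ℤ) hnat
  have hZ2 : (Nat.card (PairX m k t (· = m)) : ℤ) =
      (n.choose m : ℤ) * (restStirling m (n - m) (k - 1) : ℤ) := by
    exact_mod_cast congrArg (Nat.cast : ℕ → ℤ) heqm
  linarith [hZ, hZ2]
end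

section
/- For n ≥ 4: if m ≥ 3 then S≤m(n, n−2) = ((3n−5)/4) · C(n, 3), and if m = 2 then S≤2(n, n−2) = 3 · C(n, 4). -/
open Finset

namespace RestStirlingAux

variable {n : ℕ}

/-- Good family: pairwise disjoint blocks, each of size ≥ 2. -/
def Good (u : Finset (Finset (Fin n))) : Prop :=
  (↑u : Set (Finset (Fin n))).PairwiseDisjoint id ∧ ∀ b ∈ u, 2 ≤ b.card

def extParts (u : Finset (Finset (Fin n))) : Finset (Finset (Fin n)) :=
  u ∪ (Finset.univ \ u.sup id).image (fun x => {x})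

def extend (u : Finset (Finset (Fin n))) (hu : Good u) :
    Finpartition (Finset.univ : Finset (Fin n)) where
  parts := extParts u
  supIndep := by
    rw [Finset.supIndep_iff_pairwiseDisjoint]
    intro a ha b hb hab
    simp only [extParts, coe_union, Set.mem_union, mem_coe, mem_image, coe_image,
      Set.mem_image, mem_coe, mem_sdiff, mem_univ, true_and] at ha hb
    rcases ha with ha | ⟨x, hx, rfl⟩
    · rcases hb with hb | ⟨y, hy, rfl⟩
      · exact hu.1 ha hb hab
      · show Disjoint a {y}
        rw [Finset.disjoint_singleton_right]
        intro hya
        exact hy (Finset.le_sup (f := id) ha hya)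
    · rcases hb with hb | ⟨y, hy, rfl⟩
      · show Disjoint {x} b
        rw [Finset.disjoint_singleton_left]
        intro hxb
        exact hx (Finset.le_sup (f := id) hb hxb)
      · show Disjoint ({x} : Finset (Fin n)) {y}
        rw [Finset.disjoint_singleton_left, mem_singleton]
        exact fun h => hab (by rw [h])
  sup_parts := by
    apply le_antisymm (le_top.trans_eq rfl)
    · intro x _
      rw [Finset.mem_sup]
      by_cases hx : x ∈ u.sup id
      · rw [Finset.mem_sup] at hx
        obtain ⟨b, hb, hxb⟩ := hx
        exact ⟨b, mem_union_left _ hb, hxb⟩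
      · exact ⟨{x}, mem_union_right _ (mem_image.2 ⟨x, by simp [hx], rfl⟩), mem_singleton_self x⟩
  bot_notMem := by
    simp only [bot_eq_empty, extParts, mem_union, mem_image, not_or]
    constructor
    · intro h
      have := hu.2 _ h
      simp at this
    · rintro ⟨x, -, h⟩
      exact (singleton_ne_empty x) h

lemma extend_parts (u : Finset (Finset (Fin n))) (hu : Good u) :
    (extend u hu).parts = extParts u := rfl

def Phi (P : Finpartition (Finset.univ : Finset (Fin n))) : Finset (Finset (Fin n)) :=
  P.parts.filter (fun b => 2 ≤ b.card)

lemma good_Phi (P : Finpartition (Finset.univ : Finset (Fin n))) : Good (Phi P) := by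
  constructor
  · intro a ha b hb hab
    exact P.disjoint (mem_filter.1 ha).1 (mem_filter.1 hb).1 hab
  · exact fun b hb => (mem_filter.1 hb).2

lemma extParts_Phi (P : Finpartition (Finset.univ : Finset (Fin n))) :
    extParts (Phi P) = P.parts := by
  ext b
  simp only [extParts, mem_union, mem_image, mem_sdiff, mem_univ, true_and]
  constructor
  · rintro (hb | ⟨x, hx, rfl⟩)
    · exact (mem_filter.1 hb).1
    · obtain ⟨c, hc, hxc⟩ := P.exists_mem (mem_univ x)
      have hc1 : c.card = 1 := by
        rcases Nat.lt_or_ge c.card 2 with h | h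
        · interval_cases h' : c.card
          · exact absurd (card_eq_zero.1 h') (ne_of_mem_of_not_mem hc P.bot_notMem).elim
          · rfl
        · exact absurd (Finset.le_sup (f := id) (mem_filter.2 ⟨hc, h⟩) hxc) hx
      obtain ⟨y, hy⟩ := card_eq_one.1 hc1
      have : x = y := by rw [hy] at hxc; exact mem_singleton.1 hxc
      rw [this, ← hy]; exact hc
  · intro hb
    rcases Nat.lt_or_ge b.card 2 with h | h
    · have hpos : 0 < b.card := card_pos.2 (P.nonempty_of_mem_parts hb)
      have hb1 : b.card = 1 := by omega
      obtain ⟨x, rfl⟩ := card_eq_one.1 hb1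
      refine Or.inr ⟨x, ?_, rfl⟩
      intro hx
      rw [Finset.mem_sup] at hx
      obtain ⟨c, hc, hxc⟩ := hx
      have := P.eq_of_mem_parts hb (mem_filter.1 hc).1 (mem_singleton_self x) hxc
      have h2 := (mem_filter.1 hc).2
      rw [← this] at h2
      simp at h2
    · exact Or.inl (mem_filter.2 ⟨hb, h⟩)

lemma Phi_extend (u : Finset (Finset (Fin n))) (hu : Good u) :
    Phi (extend u hu) = u := by
  rw [Phi, extend_parts]
  ext b
  simp only [mem_filter, extParts, mem_union, mem_image]
  constructor
  · rintro ⟨hb | ⟨x, hx, rfl⟩, h2⟩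
    · exact hb
    · simp at h2
  · exact fun hb => ⟨Or.inl hb, hu.2 b hb⟩

lemma extend_Phi (P : Finpartition (Finset.univ : Finset (Fin n))) :
    extend (Phi P) (good_Phi P) = P := by
  apply Finpartition.ext
  rw [extend_parts, extParts_Phi]

lemma sup_card (u : Finset (Finset (Fin n))) (hu : Good u) :
    (u.sup id).card = ∑ b ∈ u, b.card := by
  rw [Finset.sup_eq_biUnion, Finset.card_biUnion]
  · simp
  · intro a ha b hb hab
    exact hu.1 ha hb hab

lemma sup_card_le (u : Finset (Finset (Fin n))) : (u.sup id).card ≤ n := by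
  simpa using Finset.card_le_card (Finset.subset_univ (u.sup id))

lemma card_extParts (u : Finset (Finset (Fin n))) (hu : Good u) :
    (extParts u).card = u.card + (n - ∑ b ∈ u, b.card) := by
  rw [extParts, card_union_of_disjoint, card_image_of_injective _ (fun a b h => by
      simpa using h), card_sdiff_of_subset (subset_univ _), card_univ, Fintype.card_fin, sup_card u hu]
  · rw [Finset.disjoint_left]
    intro b hb hb'
    obtain ⟨x, -, rfl⟩ := mem_image.1 hb'
    have := hu.2 _ hb
    simp at this

lemma card_sum_le (u : Finset (Finset (Fin n))) (hu : Good u) : ∑ b ∈ u, b.card ≤ n := by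
  rw [← sup_card u hu]; exact sup_card_le u

lemma classify (u : Finset (Finset (Fin n))) (hu : Good u) (hn : 4 ≤ n)
    (h : (extParts u).card = n - 2) :
    (∃ t : Finset (Fin n), u = {t} ∧ t.card = 3) ∨
    (∃ a b : Finset (Fin n), a ≠ b ∧ u = {a, b} ∧ a.card = 2 ∧ b.card = 2) := by
  rw [card_extParts u hu] at h
  have hle := card_sum_le u hu
  have hcard : u.card * 2 ≤ ∑ b ∈ u, b.card := by
    calc u.card * 2 = ∑ _b ∈ u, 2 := by rw [Finset.sum_const, smul_eq_mul, mul_comm]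
    _ ≤ _ := Finset.sum_le_sum hu.2
  have key : ∑ b ∈ u, b.card = u.card + 2 := by omega
  have hc2 : u.card ≤ 2 := by omega
  interval_cases hc : u.card
  · simp [Finset.card_eq_zero.1 hc] at key
  · obtain ⟨t, rfl⟩ := Finset.card_eq_one.1 hc
    left
    exact ⟨t, rfl, by simpa using key⟩
  · obtain ⟨a, b, hab, rfl⟩ := Finset.card_eq_two.1 hc
    right
    rw [Finset.sum_pair hab] at key
    have ha2 := hu.2 a (by simp)
    have hb2 := hu.2 b (by simp)
    exact ⟨a, b, hab, rfl, by omega, by omega⟩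

lemma card_extParts_of_three (t : Finset (Fin n)) (ht : t.card = 3) (hn : 4 ≤ n)
    (hu : Good ({t} : Finset (Finset (Fin n)))) :
    (extParts {t}).card = n - 2 := by
  rw [card_extParts _ hu]
  simp [ht]
  omega

lemma card_extParts_of_pair (a b : Finset (Fin n)) (hab : a ≠ b)
    (ha : a.card = 2) (hb : b.card = 2) (hn : 4 ≤ n)
    (hu : Good ({a, b} : Finset (Finset (Fin n)))) :
    (extParts {a, b}).card = n - 2 := by
  rw [card_extParts _ hu, Finset.sum_pair hab, Finset.card_pair hab, ha, hb]
  omega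

def pairings (t : Finset (Fin n)) : Finset (Finset (Finset (Fin n))) :=
  (t.powersetCard 2).image (fun a => ({a, t \ a} : Finset (Finset (Fin n))))

def tA (n : ℕ) : Finset (Finset (Finset (Fin n))) :=
  ((Finset.univ : Finset (Fin n)).powersetCard 3).image (fun t => {t})

def tB (n : ℕ) : Finset (Finset (Finset (Fin n))) :=
  ((Finset.univ : Finset (Fin n)).powersetCard 4).biUnion pairings

lemma sdiff_ne (t a : Finset (Fin n)) (ha : a.card = 2) : a ≠ t \ a := by
  intro h
  have : Disjoint a (t \ a) := disjoint_sdiff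
  rw [← h, disjoint_self] at this
  rw [this] at ha
  simp at ha

lemma sdiff_card (t a : Finset (Fin n)) (ht : t.card = 4) (hat : a ⊆ t) (ha : a.card = 2) :
    (t \ a).card = 2 := by
  rw [card_sdiff_of_subset hat, ht, ha]

lemma card_pairings (t : Finset (Fin n)) (ht : t.card = 4) : (pairings t).card = 3 := by
  have h6 : (t.powersetCard 2).card = 6 := by rw [card_powersetCard, ht]; rfl
  have hmem : ∀ a ∈ t.powersetCard 2,
      (fun a => ({a, t \ a} : Finset (Finset (Fin n)))) a ∈ pairings t :=
    fun a ha => mem_image_of_mem _ ha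
  have hsum := Finset.card_eq_sum_card_fiberwise hmem
  rw [h6] at hsum
  have hfib : ∀ s ∈ pairings t,
      ((t.powersetCard 2).filter (fun a => ({a, t \ a} : Finset (Finset (Fin n))) = s)).card
        = 2 := by
    intro s hs
    obtain ⟨a₀, ha₀, rfl⟩ := mem_image.1 hs
    rw [mem_powersetCard] at ha₀
    have hd : t \ (t \ a₀) = a₀ := by
      rw [sdiff_sdiff_right_self, inf_eq_inter, inter_eq_right.2 ha₀.1]
    have hne := sdiff_ne t a₀ ha₀.2
    have : (t.powersetCard 2).filter
        (fun a => ({a, t \ a} : Finset (Finset (Fin n))) = {a₀, t \ a₀}) = {a₀, t \ a₀} := by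
      ext a
      simp only [mem_filter, mem_powersetCard, mem_insert, mem_singleton]
      constructor
      · rintro ⟨-, h⟩
        have : a ∈ ({a₀, t \ a₀} : Finset (Finset (Fin n))) := by
          rw [← h]; simp
        simpa using this
      · rintro (rfl | rfl)
        · exact ⟨ha₀, rfl⟩
        · refine ⟨⟨sdiff_subset, sdiff_card t a₀ ht ha₀.1 ha₀.2⟩, ?_⟩
          rw [hd]
          exact Finset.pair_comm _ _
    rw [this, card_pair hne]
  rw [Finset.sum_congr rfl hfib, Finset.sum_const, smul_eq_mul] at hsum
  omega

lemma sup_pairings (t : Finset (Fin n)) (u : Finset (Finset (Fin n)))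
    (hu : u ∈ pairings t) : u.sup id = t := by
  obtain ⟨a, ha, rfl⟩ := mem_image.1 hu
  rw [mem_powersetCard] at ha
  simp only [Finset.sup_insert, Finset.sup_singleton, id_eq]
  rw [sup_eq_union, union_sdiff_of_subset ha.1]

lemma card_tB : (tB n).card = 3 * n.choose 4 := by
  rw [tB, Finset.card_biUnion]
  · rw [Finset.sum_congr rfl (fun t ht => card_pairings t (mem_powersetCard.1 ht).2),
      Finset.sum_const, smul_eq_mul, card_powersetCard, card_univ, Fintype.card_fin, mul_comm]
  · intro a ha b hb hab
    rw [Function.onFun, Finset.disjoint_left]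
    intro u hua hub
    exact hab ((sup_pairings a u hua).symm.trans (sup_pairings b u hub))

lemma card_tA : (tA n).card = n.choose 3 := by
  rw [tA, Finset.card_image_of_injective _ (fun a b h => by simpa using h),
    card_powersetCard, card_univ, Fintype.card_fin]

lemma tA_disj_tB : Disjoint (tA n) (tB n) := by
  rw [Finset.disjoint_left]
  intro u hua hub
  obtain ⟨t, -, rfl⟩ := mem_image.1 hua
  obtain ⟨s, hs, hu⟩ := Finset.mem_biUnion.1 hub
  obtain ⟨a, ha, h⟩ := mem_image.1 hu
  rw [mem_powersetCard] at ha
  have hne := sdiff_ne s a ha.2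
  have : ({a, s \ a} : Finset (Finset (Fin n))).card = 2 := card_pair hne
  rw [h] at this
  simp at this

lemma mem_tA_iff (u : Finset (Finset (Fin n))) :
    u ∈ tA n ↔ ∃ t : Finset (Fin n), u = {t} ∧ t.card = 3 := by
  simp only [tA, mem_image, mem_powersetCard]
  constructor
  · rintro ⟨t, ⟨-, ht⟩, rfl⟩
    exact ⟨t, rfl, ht⟩
  · rintro ⟨t, rfl, ht⟩
    exact ⟨t, ⟨subset_univ _, ht⟩, rfl⟩

lemma mem_tB_iff (u : Finset (Finset (Fin n))) :
    u ∈ tB n ↔ ∃ a b : Finset (Fin n),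
      Disjoint a b ∧ u = {a, b} ∧ a.card = 2 ∧ b.card = 2 := by
  simp only [tB, Finset.mem_biUnion, pairings, mem_image, mem_powersetCard]
  constructor
  · rintro ⟨t, ⟨-, ht⟩, a, ⟨hat, ha⟩, rfl⟩
    exact ⟨a, t \ a, disjoint_sdiff, rfl, ha, sdiff_card t a ht hat ha⟩
  · rintro ⟨a, b, hd, rfl, ha, hb⟩
    refine ⟨a ∪ b, ⟨subset_univ _, ?_⟩, a, ⟨subset_union_left, ha⟩, ?_⟩
    · rw [card_union_of_disjoint hd, ha, hb]
    · rw [Finset.union_sdiff_cancel_left hd]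

lemma good_of_mem (u : Finset (Finset (Fin n))) (hu : u ∈ tA n ∪ tB n) : Good u := by
  rcases mem_union.1 hu with h | h
  · obtain ⟨t, rfl, ht⟩ := (mem_tA_iff u).1 h
    constructor
    · rw [coe_singleton]
      exact Set.pairwiseDisjoint_singleton _ _
    · intro b hb
      rw [mem_singleton.1 hb, ht]
      omega
  · obtain ⟨a, b, hd, rfl, ha, hb⟩ := (mem_tB_iff u).1 h
    constructor
    · intro x hx y hy hxy
      simp only [coe_insert, coe_singleton, Set.mem_insert_iff, Set.mem_singleton_iff] at hx hy
      rcases hx with rfl | rfl <;> rcases hy with rfl | rfl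
      · exact absurd rfl hxy
      · exact hd
      · exact hd.symm
      · exact absurd rfl hxy
    · intro c hc
      rcases mem_insert.1 hc with rfl | hc
      · omega
      · rw [mem_singleton.1 hc]; omega

lemma Phi_mem (P : Finpartition (Finset.univ : Finset (Fin n))) (hn : 4 ≤ n)
    (hP : P.parts.card = n - 2) : Phi P ∈ tA n ∪ tB n := by
  have h : (extParts (Phi P)).card = n - 2 := by rw [extParts_Phi]; exact hP
  rcases classify (Phi P) (good_Phi P) hn h with ⟨t, ht, ht3⟩ | ⟨a, b, hab, hu, ha, hb⟩
  · exact mem_union_left _ ((mem_tA_iff _).2 ⟨t, ht, ht3⟩)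
  · refine mem_union_right _ ((mem_tB_iff _).2 ⟨a, b, ?_, hu, ha, hb⟩)
    exact (good_Phi P).1 (by rw [hu]; simp) (by rw [hu]; simp) hab

lemma extend_card (u : Finset (Finset (Fin n))) (hu : Good u) (hn : 4 ≤ n)
    (h : u ∈ tA n ∪ tB n) : (extend u hu).parts.card = n - 2 := by
  rw [extend_parts]
  rcases mem_union.1 h with h | h
  · obtain ⟨t, rfl, ht⟩ := (mem_tA_iff u).1 h
    exact card_extParts_of_three t ht hn hu
  · obtain ⟨a, b, hd, rfl, ha, hb⟩ := (mem_tB_iff u).1 h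
    have hab : a ≠ b := by
      intro hh
      rw [hh, disjoint_self] at hd
      rw [hd] at hb; simp at hb
    exact card_extParts_of_pair a b hab ha hb hn hu

lemma extend_bound (u : Finset (Finset (Fin n))) (hu : Good u) (c : ℕ)
    (hc : ∀ b ∈ u, b.card ≤ c) (h1 : 1 ≤ c) :
    ∀ b ∈ (extend u hu).parts, b.card ≤ c := by
  intro b hb
  rw [extend_parts] at hb
  rcases mem_union.1 hb with hb | hb
  · exact hc b hb
  · obtain ⟨x, -, rfl⟩ := mem_image.1 hb
    simpa using h1

lemma bound_of_mem_union (u : Finset (Finset (Fin n))) (h : u ∈ tA n ∪ tB n) :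
    ∀ b ∈ u, b.card ≤ 3 := by
  rcases mem_union.1 h with h | h
  · obtain ⟨t, rfl, ht⟩ := (mem_tA_iff u).1 h
    intro b hb; rw [mem_singleton.1 hb, ht]
  · obtain ⟨a, b, hd, rfl, ha, hb⟩ := (mem_tB_iff u).1 h
    intro c hc
    rcases mem_insert.1 hc with rfl | hc
    · omega
    · rw [mem_singleton.1 hc]; omega

lemma bound_of_mem_tB (u : Finset (Finset (Fin n))) (h : u ∈ tB n) :
    ∀ b ∈ u, b.card ≤ 2 := by
  obtain ⟨a, b, hd, rfl, ha, hb⟩ := (mem_tB_iff u).1 h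
  intro c hc
  rcases mem_insert.1 hc with rfl | hc
  · omega
  · rw [mem_singleton.1 hc]; omega

lemma Phi_mem_tB (P : Finpartition (Finset.univ : Finset (Fin n))) (hn : 4 ≤ n)
    (hP : P.parts.card = n - 2) (hb : ∀ b ∈ P.parts, b.card ≤ 2) : Phi P ∈ tB n := by
  rcases mem_union.1 (Phi_mem P hn hP) with h | h
  · obtain ⟨t, ht, ht3⟩ := (mem_tA_iff _).1 h
    have htP : t ∈ Phi P := by rw [ht]; exact mem_singleton_self t
    have := hb t (mem_filter.1 htP).1
    omega
  · exact h

end RestStirlingAux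

open RestStirlingAux Finset in
lemma restStirling_big (m n : ℕ) (hn : 4 ≤ n) (hm : 3 ≤ m) :
    restStirling m n (n - 2) = n.choose 3 + 3 * n.choose 4 := by
  rw [restStirling, ← card_tA (n := n), ← card_tB (n := n),
    ← card_union_of_disjoint tA_disj_tB, ← Nat.card_eq_finsetCard]
  apply Nat.card_congr
  refine ⟨fun P => ⟨Phi P.1, Phi_mem P.1 hn P.2.1⟩,
    fun u => ⟨extend u.1 (good_of_mem u.1 u.2), extend_card u.1 (good_of_mem u.1 u.2) hn u.2,
      ?_⟩, fun P => ?_, fun u => ?_⟩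
  · exact extend_bound u.1 (good_of_mem u.1 u.2) m
      (fun b hb => (bound_of_mem_union u.1 u.2 b hb).trans hm) (by omega)
  · exact Subtype.ext (extend_Phi P.1)
  · exact Subtype.ext (Phi_extend u.1 (good_of_mem u.1 u.2))

open RestStirlingAux Finset in
lemma restStirling_two (n : ℕ) (hn : 4 ≤ n) :
    restStirling 2 n (n - 2) = 3 * n.choose 4 := by
  rw [restStirling, ← card_tB (n := n), ← Nat.card_eq_finsetCard]
  apply Nat.card_congr
  refine ⟨fun P => ⟨Phi P.1, Phi_mem_tB P.1 hn P.2.1 P.2.2⟩,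
    fun u => ⟨extend u.1 (good_of_mem u.1 (mem_union_right _ u.2)),
      extend_card u.1 (good_of_mem u.1 (mem_union_right _ u.2)) hn (mem_union_right _ u.2),
      ?_⟩, fun P => ?_, fun u => ?_⟩
  · exact extend_bound u.1 (good_of_mem u.1 (mem_union_right _ u.2)) 2
      (bound_of_mem_tB u.1 u.2) (by omega)
  · exact Subtype.ext (extend_Phi P.1)
  · exact Subtype.ext (Phi_extend u.1 (good_of_mem u.1 (mem_union_right _ u.2)))

theorem restStirling_sub_two (m n : ℕ) (hn : 4 ≤ n) :
    (3 ≤ m → (restStirling m n (n - 2) : ℚ) = (3 * n - 5) / 4 * n.choose 3) ∧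
    restStirling 2 n (n - 2) = 3 * n.choose 4 := by
  refine ⟨fun hm => ?_, restStirling_two n hn⟩
  rw [restStirling_big m n hn hm]
  have h4 : (n.choose 4 : ℚ) * 4 = n.choose 3 * ((n : ℚ) - 3) := by
    have := Nat.choose_succ_right_eq n 3
    have h3 : (3 : ℕ) ≤ n := by omega
    have := congrArg (Nat.cast : ℕ → ℚ) this
    push_cast [Nat.cast_sub h3] at this
    exact this
  push_cast
  field_simp
  ring_nf
  ring_nf at h4
  linarith [h4]
end

section
/- For n ≥ 4: S≤m(n, n−3) = C(n,4)·C(n−2,2) if m ≥ 4; S≤3(n, n−3) = 15·C(n,6) + 10·C(n,5); and S≤2(n, n−3) = 15·C(n,6). -/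
open Finset

/-- decidable pairwise-disjointness -/
def PDj {α : Type*} [DecidableEq α] (Q : Finset (Finset α)) : Prop :=
  ∀ a ∈ Q, ∀ b ∈ Q, a ≠ b → Disjoint a b

instance {α : Type*} [DecidableEq α] (Q : Finset (Finset α)) : Decidable (PDj Q) := by
  unfold PDj; infer_instance

variable {n m : ℕ}

/-- parts of a partition of `univ : Finset (Fin n)` decompose as big parts plus
singletons of the complement of union of big parts. -/
lemma parts_decomp (P : Finpartition (univ : Finset (Fin n))) :
    P.parts = P.parts.filter (fun b => 2 ≤ b.card) ∪
      (univ \ (P.parts.filter (fun b => 2 ≤ b.card)).sup id).image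
        (fun x => ({x} : Finset (Fin n))) := by
  set Q := P.parts.filter (fun b => 2 ≤ b.card) with hQ
  ext b
  simp only [mem_union, mem_image, mem_sdiff, mem_univ, true_and]
  constructor
  · intro hb
    by_cases h2 : 2 ≤ b.card
    · left; exact mem_filter.2 ⟨hb, h2⟩
    · right
      have hbne : b.Nonempty := P.nonempty_of_mem_parts hb
      have hb1 : b.card = 1 := by
        have := Finset.card_pos.2 hbne; omega
      obtain ⟨x, hx⟩ := Finset.card_eq_one.1 hb1
      refine ⟨x, ?_, hx.symm⟩
      intro hxs
      rw [Finset.sup_eq_biUnion] at hxs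
      obtain ⟨c, hc, hxc⟩ := Finset.mem_biUnion.1 hxs
      have hcP := (mem_filter.1 hc).1
      have hbc : b = c := P.eq_of_mem_parts hb hcP (hx ▸ mem_singleton_self x) hxc
      have h2c := (mem_filter.1 hc).2
      rw [← hbc] at h2c
      omega
  · rintro (hb | ⟨x, hxs, rfl⟩)
    · exact (mem_filter.1 hb).1
    · obtain ⟨c, hc, hxc⟩ := P.exists_mem (mem_univ x)
      have hcsmall : ¬ 2 ≤ c.card := by
        intro h2
        exact hxs (by
          rw [Finset.sup_eq_biUnion]
          exact Finset.mem_biUnion.2 ⟨c, mem_filter.2 ⟨hc, h2⟩, hxc⟩)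
      have hbne : c.Nonempty := P.nonempty_of_mem_parts hc
      have hb1 : c.card = 1 := by have := Finset.card_pos.2 hbne; omega
      obtain ⟨y, hy⟩ := Finset.card_eq_one.1 hb1
      have : y = x := by
        have := hy ▸ hxc; exact (mem_singleton.1 this).symm
      subst this
      exact hy ▸ hc

section build
variable (Q : Finset (Finset (Fin n)))

/-- build a partition from pairwise-disjoint blocks of size ≥ 2 by adding singletons -/
def buildPartition (h2 : ∀ b ∈ Q, 2 ≤ b.card) (hpd : PDj Q) :
    Finpartition (univ : Finset (Fin n)) where
  parts := Q ∪ (univ \ Q.sup id).image (fun x => ({x} : Finset (Fin n)))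
  supIndep := by
    rw [Finset.supIndep_iff_pairwiseDisjoint]
    intro a ha b hb hab
    simp only [Finset.coe_union, Set.mem_union, mem_coe, mem_image, mem_sdiff, mem_univ,
      true_and] at ha hb
    simp only [Function.onFun, id_eq]
    rcases ha with ha | ha <;> rcases hb with hb | hb
    · exact hpd a ha b hb hab
    · obtain ⟨x, hxs, rfl⟩ := hb
      rw [Finset.disjoint_singleton_right]
      exact fun hxa => hxs (Finset.le_sup (f := id) ha hxa)
    · obtain ⟨x, hxs, rfl⟩ := ha
      rw [Finset.disjoint_singleton_left]
      exact fun hxb => hxs (Finset.le_sup (f := id) hb hxb)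
    · obtain ⟨x, hxs, rfl⟩ := ha
      obtain ⟨y, hys, rfl⟩ := hb
      rw [Finset.disjoint_singleton_right, mem_singleton]
      intro h; exact hab (by rw [h])
  sup_parts := by
    apply le_antisymm
    · exact Finset.sup_le fun b _ => le_top
    · intro x _
      rw [Finset.sup_eq_biUnion, Finset.mem_biUnion]
      by_cases hx : x ∈ Q.sup id
      · rw [Finset.sup_eq_biUnion, Finset.mem_biUnion] at hx
        obtain ⟨b, hb, hxb⟩ := hx
        exact ⟨b, mem_union_left _ hb, hxb⟩
      · exact ⟨{x}, mem_union_right _ (mem_image.2 ⟨x, mem_sdiff.2 ⟨mem_univ x, hx⟩, rfl⟩),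
          mem_singleton_self x⟩
  bot_notMem := by
    intro h
    rcases mem_union.1 h with h | h
    · have := h2 _ h
      simp at this
    · obtain ⟨x, _, hx⟩ := mem_image.1 h
      exact (Finset.singleton_ne_empty x) (by simpa using hx)

end build

def AT (m n k : ℕ) := {P : Finpartition (univ : Finset (Fin n)) //
    P.parts.card = k ∧ ∀ b ∈ P.parts, b.card ≤ m}

def BT (m n : ℕ) := {Q : Finset (Finset (Fin n)) //
    (∀ b ∈ Q, 2 ≤ b.card ∧ b.card ≤ m) ∧ PDj Q ∧ ∑ b ∈ Q, b.card = Q.card + 3}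

lemma smallPartsSum (P : Finpartition (univ : Finset (Fin n))) :
    ∑ b ∈ P.parts.filter (fun b => ¬ 2 ≤ b.card), b.card
      = (P.parts.filter (fun b => ¬ 2 ≤ b.card)).card := by
  rw [Finset.card_eq_sum_ones]
  refine Finset.sum_congr rfl fun b hb => ?_
  have h1 := (mem_filter.1 hb).2
  have := Finset.card_pos.2 (P.nonempty_of_mem_parts (mem_filter.1 hb).1)
  omega

lemma sum_parts_univ (P : Finpartition (univ : Finset (Fin n))) :
    ∑ b ∈ P.parts, b.card = n := by
  rw [P.sum_card_parts, card_univ, Fintype.card_fin]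

def toBT (hn : 4 ≤ n) : AT m n (n - 3) → BT m n := fun A =>
  ⟨A.1.parts.filter (fun b => 2 ≤ b.card), by
    have hk := A.2.1
    have hm := A.2.2
    set P := A.1 with hPdef
    constructor
    · intro b hb
      exact ⟨(mem_filter.1 hb).2, hm b (mem_filter.1 hb).1⟩
    constructor
    · intro a ha b hb hab
      exact P.disjoint (mem_filter.1 ha).1 (mem_filter.1 hb).1 hab
    · have htot := sum_parts_univ P
      rw [← Finset.sum_filter_add_sum_filter_not P.parts (fun b => 2 ≤ b.card),
        smallPartsSum P] at htot
      have hcard := Finset.card_filter_add_card_filter_not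
        (s := P.parts) (p := fun b => 2 ≤ b.card)
      rw [hk] at hcard
      omega⟩

lemma toBT_bijective (hn : 4 ≤ n) (hm1 : 1 ≤ m) : Function.Bijective (toBT (m := m) hn) := by
  constructor
  · rintro ⟨P, hP⟩ ⟨P', hP'⟩ h
    have h' : P.parts.filter (fun b => 2 ≤ b.card) = P'.parts.filter (fun b => 2 ≤ b.card) :=
      congrArg Subtype.val h
    have : P.parts = P'.parts := by
      rw [parts_decomp P, parts_decomp P', h']
    exact Subtype.ext (Finpartition.ext this)
  · rintro ⟨Q, hsz, hpd, hsum⟩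
    have h2 : ∀ b ∈ Q, 2 ≤ b.card := fun b hb => (hsz b hb).1
    refine ⟨⟨buildPartition Q h2 hpd, ?_, ?_⟩, ?_⟩
    · -- card of parts
      show (Q ∪ (univ \ Q.sup id).image (fun x => ({x} : Finset (Fin n)))).card = n - 3
      have hdisj : Disjoint Q ((univ \ Q.sup id).image (fun x => ({x} : Finset (Fin n)))) := by
        rw [Finset.disjoint_left]
        intro b hb hb'
        obtain ⟨x, _, rfl⟩ := mem_image.1 hb'
        have := h2 _ hb
        simp at this
      rw [Finset.card_union_of_disjoint hdisj,
        Finset.card_image_of_injective _ Finset.singleton_injective,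
        Finset.card_sdiff_of_subset (Finset.subset_univ _), card_univ, Fintype.card_fin]
      have hsup : (Q.sup id).card = Q.card + 3 := by
        rw [Finset.sup_eq_biUnion, Finset.card_biUnion (t := id) hpd]
        simpa using hsum
      have hle : (Q.sup id).card ≤ n := by
        simpa using Finset.card_le_univ (Q.sup id)
      omega
    · -- all blocks ≤ m
      intro b hb
      rcases mem_union.1 hb with hb | hb
      · exact (hsz b hb).2
      · obtain ⟨x, _, rfl⟩ := mem_image.1 hb
        simpa using hm1
    · -- maps back to Q
      apply Subtype.ext
      show (Q ∪ _).filter (fun b => 2 ≤ b.card) = Q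
      rw [Finset.filter_union]
      have e1 : Q.filter (fun b => 2 ≤ b.card) = Q := Finset.filter_true_of_mem h2
      have e2 : ((univ \ Q.sup id).image (fun x => ({x} : Finset (Fin n)))).filter
          (fun b => 2 ≤ b.card) = ∅ := by
        rw [Finset.filter_eq_empty_iff]
        intro b hb
        obtain ⟨x, _, rfl⟩ := mem_image.1 hb
        simp
      rw [e1, e2, union_empty]

lemma card_AT_eq_BT (hn : 4 ≤ n) (hm1 : 1 ≤ m) :
    Nat.card (AT m n (n - 3)) = Nat.card (BT m n) :=
  Nat.card_congr (Equiv.ofBijective _ (toBT_bijective hn hm1))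

abbrev B1T (m n : ℕ) := {A : Finset (Fin n) // A.card = 4 ∧ 4 ≤ m}
abbrev B2T (m n : ℕ) := {p : Finset (Fin n) × Finset (Fin n) //
    p.1.card = 3 ∧ p.2.card = 2 ∧ Disjoint p.1 p.2 ∧ 3 ≤ m}
abbrev B3T (m n : ℕ) := {Q : Finset (Finset (Fin n)) //
    Q.card = 3 ∧ (∀ b ∈ Q, b.card = 2) ∧ PDj Q ∧ 2 ≤ m}

def shapeMap : B1T m n ⊕ B2T m n ⊕ B3T m n → BT m n
  | Sum.inl ⟨A, hA, hm⟩ => ⟨{A}, by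
      refine ⟨?_, ?_, ?_⟩
      · intro b hb; rw [mem_singleton.1 hb]; omega
      · intro x hx y hy hxy
        rw [mem_singleton.1 hx, mem_singleton.1 hy] at hxy
        exact absurd rfl hxy
      · simp [hA]⟩
  | Sum.inr (Sum.inl ⟨⟨A, B⟩, hp⟩) => ⟨{A, B}, by
      have hA : A.card = 3 := hp.1
      have hB : B.card = 2 := hp.2.1
      have hd : Disjoint A B := hp.2.2.1
      have hm : 3 ≤ m := hp.2.2.2
      have hne : A ≠ B := by intro h; rw [h, hB] at hA; omega
      refine ⟨?_, ?_, ?_⟩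
      · intro b hb
        rcases mem_insert.1 hb with rfl | hb
        · omega
        · rw [mem_singleton.1 hb]; omega
      · intro x hx y hy hxy
        have hx' : x = A ∨ x = B := by
          rcases mem_insert.1 hx with h | h
          · exact Or.inl h
          · exact Or.inr (mem_singleton.1 h)
        have hy' : y = A ∨ y = B := by
          rcases mem_insert.1 hy with h | h
          · exact Or.inl h
          · exact Or.inr (mem_singleton.1 h)
        rcases hx' with rfl | rfl <;> rcases hy' with rfl | rfl
        · exact absurd rfl hxy
        · exact hd
        · exact hd.symm
        · exact absurd rfl hxy
      · rw [Finset.sum_pair hne, Finset.card_pair hne, hA, hB]⟩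
  | Sum.inr (Sum.inr ⟨Q, hc, h2, hpd, hm⟩) => ⟨Q, by
      refine ⟨fun b hb => by have := h2 b hb; omega, hpd, ?_⟩
      rw [Finset.sum_congr rfl h2, Finset.sum_const, hc]
      simp⟩

lemma shapeMap_injective : Function.Injective (shapeMap (m := m) (n := n)) := by
  have cardne : ∀ {k l : ℕ} (S T : Finset (Finset (Fin n))), S.card = k → T.card = l →
      k ≠ l → S ≠ T := by
    rintro k l S T hS hT hkl rfl
    exact hkl (hS ▸ hT ▸ rfl)
  rintro (⟨A, hA, hm⟩ | ⟨⟨A, B⟩, hp⟩ | ⟨Q, hc, h2, hpd, hm⟩)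
    <;> rintro (⟨A', hA', hm'⟩ | ⟨⟨A', B'⟩, hp'⟩ | ⟨Q', hc', h2', hpd', hm'⟩)
    <;> intro h
    <;> have hval := congrArg Subtype.val h
    <;> simp only [shapeMap] at hval
  · exact congrArg Sum.inl (Subtype.ext (Finset.singleton_inj.1 hval))
  · exfalso
    have hne : A' ≠ B' := by
      intro hh; rw [hh] at hp'; have := hp'.1; rw [hp'.2.1] at this; omega
    exact cardne _ _ (Finset.card_singleton A) (Finset.card_pair hne) (by omega) hval
  · exact absurd hval (cardne _ _ (Finset.card_singleton A) hc' (by omega))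
  · exfalso
    have hne : A ≠ B := by
      intro hh; rw [hh] at hp; have := hp.1; rw [hp.2.1] at this; omega
    exact cardne _ _ (Finset.card_pair hne) (Finset.card_singleton A') (by omega) hval
  · -- pair pair
    have hA : A.card = 3 := hp.1
    have hB : B.card = 2 := hp.2.1
    have hA' : A'.card = 3 := hp'.1
    have hB' : B'.card = 2 := hp'.2.1
    have h1 : A = A' := by
      have hmem : A ∈ ({A', B'} : Finset (Finset (Fin n))) := hval ▸ mem_insert_self A {B}
      rcases mem_insert.1 hmem with h | h
      · exact h
      · rw [mem_singleton.1 h, hB'] at hA; omega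
    have h2 : B = B' := by
      have hmem : B ∈ ({A', B'} : Finset (Finset (Fin n))) :=
        hval ▸ mem_insert.2 (Or.inr (mem_singleton_self B))
      rcases mem_insert.1 hmem with h | h
      · rw [h, hA'] at hB; omega
      · exact mem_singleton.1 h
    exact congrArg (Sum.inr ∘ Sum.inl) (Subtype.ext (Prod.ext h1 h2))
  · exfalso
    have hne : A ≠ B := by
      intro hh; rw [hh] at hp; have := hp.1; rw [hp.2.1] at this; omega
    exact cardne _ _ (Finset.card_pair hne) hc' (by omega) hval
  · exact absurd hval (cardne _ _ hc (Finset.card_singleton A') (by omega))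
  · exfalso
    have hne : A' ≠ B' := by
      intro hh; rw [hh] at hp'; have := hp'.1; rw [hp'.2.1] at this; omega
    exact cardne _ _ hc (Finset.card_pair hne) (by omega) hval
  · exact congrArg (Sum.inr ∘ Sum.inr) (Subtype.ext hval)

lemma shapeMap_surjective : Function.Surjective (shapeMap (m := m) (n := n)) := by
  rintro ⟨Q, hsz, hpd, hsum⟩
  have h2 : ∀ b ∈ Q, 2 ≤ b.card := fun b hb => (hsz b hb).1
  have hQle : Q.card ≤ 3 := by
    have := Finset.card_nsmul_le_sum Q (fun b => b.card) 2 h2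
    simp only [smul_eq_mul] at this
    omega
  have hcases : Q.card = 0 ∨ Q.card = 1 ∨ Q.card = 2 ∨ Q.card = 3 := by omega
  rcases hcases with hQc | hQc | hQc | hQc
  · exfalso
    rw [Finset.card_eq_zero.1 hQc] at hsum
    simp at hsum
  · obtain ⟨A, rfl⟩ := Finset.card_eq_one.1 hQc
    rw [Finset.sum_singleton, Finset.card_singleton] at hsum
    have hA4 : A.card = 4 := by omega
    have hm4 : 4 ≤ m := hA4 ▸ (hsz A (mem_singleton_self A)).2
    exact ⟨Sum.inl ⟨A, hA4, hm4⟩, Subtype.ext rfl⟩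
  · obtain ⟨A, B, hne, rfl⟩ := Finset.card_eq_two.1 hQc
    rw [Finset.sum_pair hne, Finset.card_pair hne] at hsum
    have hA := h2 A (mem_insert_self _ _)
    have hB := h2 B (mem_insert.2 (Or.inr (mem_singleton_self B)))
    have hd : Disjoint A B := hpd A (mem_insert_self _ _)
      B (mem_insert.2 (Or.inr (mem_singleton_self B))) hne
    have hmA := (hsz A (mem_insert_self _ _)).2
    have hmB := (hsz B (mem_insert.2 (Or.inr (mem_singleton_self B)))).2
    rcases (by omega : A.card = 3 ∧ B.card = 2 ∨ A.card = 2 ∧ B.card = 3) with ⟨h3, h4⟩ | ⟨h3, h4⟩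
    · exact ⟨Sum.inr (Sum.inl ⟨⟨A, B⟩, h3, h4, hd, by omega⟩), Subtype.ext rfl⟩
    · exact ⟨Sum.inr (Sum.inl ⟨⟨B, A⟩, h4, h3, hd.symm, by omega⟩),
        Subtype.ext (Finset.pair_comm B A)⟩
  · have hall : ∀ b ∈ Q, b.card = 2 := by
      rw [hQc] at hsum
      intro b hb
      by_contra hb2
      have hb3 : 3 ≤ b.card := by have := h2 b hb; omega
      have h7 : 7 ≤ ∑ c ∈ Q, c.card := by
        calc 7 = 3 + 2 * 2 := by norm_num
        _ ≤ b.card + 2 * 2 := by omega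
        _ ≤ b.card + ∑ c ∈ Q.erase b, c.card := by
            have := Finset.card_nsmul_le_sum (Q.erase b) (fun c => c.card) 2
              (fun c hc => h2 c (Finset.mem_of_mem_erase hc))
            have hce : (Q.erase b).card = 2 := by
              rw [Finset.card_erase_of_mem hb, hQc]
            rw [hce] at this
            simp only [smul_eq_mul] at this
            omega
        _ = ∑ c ∈ Q, c.card := Finset.add_sum_erase Q _ hb
      omega
    obtain ⟨b, hb⟩ : Q.Nonempty := Finset.card_pos.1 (by omega)
    have hm2 : 2 ≤ m := (hall b hb) ▸ (hsz b hb).2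
    exact ⟨Sum.inr (Sum.inr ⟨Q, hQc, hall, hpd, hm2⟩), Subtype.ext rfl⟩

lemma card_BT (hn : 4 ≤ n) :
    Nat.card (BT m n) = Nat.card (B1T m n) + (Nat.card (B2T m n) + Nat.card (B3T m n)) := by
  rw [← Nat.card_congr (Equiv.ofBijective _ ⟨shapeMap_injective (m := m) (n := n),
    shapeMap_surjective⟩), Nat.card_sum, Nat.card_sum]

lemma card_setsOfCard (n k : ℕ) :
    Fintype.card {A : Finset (Fin n) // A.card = k} = n.choose k := by
  rw [Fintype.card_subtype]
  have : (univ.filter fun A : Finset (Fin n) => A.card = k) = powersetCard k univ := by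
    ext A
    simp [Finset.mem_powersetCard_univ]
  rw [this, card_powersetCard, card_univ, Fintype.card_fin]

lemma card_B1_big (hm : 4 ≤ m) : Nat.card (B1T m n) = n.choose 4 := by
  rw [Nat.card_congr (Equiv.subtypeEquivRight (q := fun A : Finset (Fin n) => A.card = 4)
    (fun A => and_iff_left hm)), Nat.card_eq_fintype_card, card_setsOfCard]

lemma card_B1_small (hm : m < 4) : Nat.card (B1T m n) = 0 := by
  have : IsEmpty (B1T m n) := ⟨fun A => by have := A.2.2; omega⟩
  exact Nat.card_of_isEmpty

lemma card_B2_big (hm : 3 ≤ m) : Nat.card (B2T m n) = n.choose 3 * (n - 3).choose 2 := by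
  have e1 : B2T m n ≃ {p : Finset (Fin n) × Finset (Fin n) //
      p.1.card = 3 ∧ p.2.card = 2 ∧ Disjoint p.1 p.2} :=
    Equiv.subtypeEquivRight (fun p => by tauto)
  have e2 : {p : Finset (Fin n) × Finset (Fin n) //
      p.1.card = 3 ∧ p.2.card = 2 ∧ Disjoint p.1 p.2} ≃
      Σ A : {A : Finset (Fin n) // A.card = 3},
        {B : Finset (Fin n) // B.card = 2 ∧ Disjoint A.1 B} :=
    { toFun := fun p => ⟨⟨p.1.1, p.2.1⟩, ⟨p.1.2, p.2.2.1, p.2.2.2⟩⟩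
      invFun := fun x => ⟨(x.1.1, x.2.1), x.1.2, x.2.2.1, x.2.2.2⟩
      left_inv := fun p => rfl
      right_inv := fun x => rfl }
  rw [Nat.card_congr (e1.trans e2), Nat.card_eq_fintype_card, Fintype.card_sigma]
  have hfib : ∀ A : {A : Finset (Fin n) // A.card = 3},
      Fintype.card {B : Finset (Fin n) // B.card = 2 ∧ Disjoint A.1 B} = (n - 3).choose 2 := by
    intro A
    have e3 : {B : Finset (Fin n) // B.card = 2 ∧ Disjoint A.1 B} ≃
        {B : Finset (Fin n) // B ∈ (univ \ A.1).powersetCard 2} :=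
      Equiv.subtypeEquivRight (fun B => by
        rw [Finset.mem_powersetCard]
        constructor
        · rintro ⟨h1, h2⟩
          exact ⟨Finset.subset_sdiff.2 ⟨subset_univ B, h2.symm⟩, h1⟩
        · rintro ⟨h1, h2⟩
          exact ⟨h2, ((Finset.subset_sdiff.1 h1).2).symm⟩)
    rw [Fintype.card_congr e3, Fintype.card_coe, card_powersetCard,
      Finset.card_sdiff_of_subset (subset_univ _), card_univ, Fintype.card_fin, A.2]
  rw [Finset.sum_congr rfl (fun A _ => hfib A), Finset.sum_const, smul_eq_mul,
    Finset.card_univ, card_setsOfCard]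

lemma card_B2_small (hm : m < 3) : Nat.card (B2T m n) = 0 := by
  have : IsEmpty (B2T m n) := ⟨fun A => by have := A.2.2.2.2; omega⟩
  exact Nat.card_of_isEmpty

set_option maxRecDepth 10000 in
lemma card_match6 :
    Nat.card {Q : Finset (Finset (Fin 6)) //
      Q.card = 3 ∧ (∀ b ∈ Q, b.card = 2) ∧ PDj Q ∧ Q.sup id = univ} = 15 := by
  have e : {Q : Finset (Finset (Fin 6)) //
      Q.card = 3 ∧ (∀ b ∈ Q, b.card = 2) ∧ PDj Q ∧ Q.sup id = univ} ≃
      {Q : Finset (Finset (Fin 6)) //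
        Q ∈ ((((univ : Finset (Finset (Fin 6))).filter (fun b => b.card = 2)).powersetCard 3).filter
          (fun Q => PDj Q ∧ Q.sup id = univ))} := by
    refine Equiv.subtypeEquivRight (fun Q => ?_)
    rw [Finset.mem_filter, Finset.mem_powersetCard]
    constructor
    · rintro ⟨h1, h2, h3, h4⟩
      exact ⟨⟨fun b hb => mem_filter.2 ⟨mem_univ _, h2 b hb⟩, h1⟩, h3, h4⟩
    · rintro ⟨⟨h1, h2⟩, h3, h4⟩
      exact ⟨h2, fun b hb => (mem_filter.1 (h1 hb)).2, h3, h4⟩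
  rw [Nat.card_congr e, Nat.card_eq_fintype_card, Fintype.card_coe]
  decide

lemma card_matchT (T : Finset (Fin n)) (hT : T.card = 6) :
    Nat.card {Q : Finset (Finset (Fin n)) //
      Q.card = 3 ∧ (∀ b ∈ Q, b.card = 2) ∧ PDj Q ∧ Q.sup id = T} = 15 := by
  classical
  have e : {x // x ∈ T} ≃ Fin 6 := T.equivFin.trans (finCongr hT)
  set j : Fin 6 → Fin n := fun i => (e.symm i).1 with hj_def
  have hj : Function.Injective j := fun i i' h => by
    apply e.symm.injective; exact Subtype.ext h
  have hjT : ∀ i, j i ∈ T := fun i => (e.symm i).2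
  let jE : Fin 6 ↪ Fin n := ⟨j, hj⟩
  let k : Fin n → Fin 6 := fun x => if h : x ∈ T then e ⟨x, h⟩ else 0
  have hkj : ∀ i, k (j i) = i := fun i => by
    simp only [k, dif_pos (hjT i)]
    simp [j]
  have hjk : ∀ x ∈ T, j (k x) = x := fun x hx => by
    simp only [k, dif_pos hx]
    simp [j]
  let Φ : {Q : Finset (Finset (Fin 6)) //
      Q.card = 3 ∧ (∀ b ∈ Q, b.card = 2) ∧ PDj Q ∧ Q.sup id = univ} →
      {Q : Finset (Finset (Fin n)) //
      Q.card = 3 ∧ (∀ b ∈ Q, b.card = 2) ∧ PDj Q ∧ Q.sup id = T} := fun Q =>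
    ⟨Q.1.map ⟨fun s => s.map jE, Finset.map_injective jE⟩, by
      obtain ⟨Q, hc, h2, hpd, hsup⟩ := Q
      refine ⟨by simpa using hc, ?_, ?_, ?_⟩
      · intro b hb
        obtain ⟨s, hs, rfl⟩ := Finset.mem_map.1 hb
        simp only [Function.Embedding.coeFn_mk]
        rw [Finset.card_map]
        exact h2 s hs
      · intro a ha b hb hab
        obtain ⟨s, hs, rfl⟩ := Finset.mem_map.1 ha
        obtain ⟨t, ht, rfl⟩ := Finset.mem_map.1 hb
        simp only [Function.Embedding.coeFn_mk]
        rw [Finset.disjoint_map]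
        exact hpd s hs t ht (fun h => hab (by rw [h]))
      · ext x
        simp only [Finset.mem_sup, Finset.mem_map, Function.Embedding.coeFn_mk, id_eq]
        constructor
        · rintro ⟨b, ⟨s, hs, rfl⟩, hx⟩
          obtain ⟨i, hi, rfl⟩ := Finset.mem_map.1 hx
          exact hjT i
        · intro hx
          have hi : k x ∈ (univ : Finset (Fin 6)) := mem_univ _
          rw [← hsup, Finset.mem_sup] at hi
          obtain ⟨s, hs, hks⟩ := hi
          exact ⟨s.map jE, ⟨s, hs, rfl⟩, Finset.mem_map.2 ⟨k x, hks, hjk x hx⟩⟩⟩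
  have hbij : Function.Bijective Φ := by
    constructor
    · intro Q Q' h
      exact Subtype.ext (Finset.map_injective _ (congrArg Subtype.val h))
    · rintro ⟨M, hc, h2, hpd, hsup⟩
      have hbT : ∀ b ∈ M, b ⊆ T := by
        intro b hb
        rw [← hsup]
        exact Finset.le_sup (f := id) hb
      have hpre : ∀ b ∈ M, (b.image k).map jE = b := by
        intro b hb
        ext y
        simp only [Finset.mem_map, Finset.mem_image, Function.Embedding.coeFn_mk]
        constructor
        · rintro ⟨i, ⟨x, hx, rfl⟩, rfl⟩
          show j (k x) ∈ b
          rw [hjk x (hbT b hb hx)]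
          exact hx
        · intro hy
          exact ⟨k y, ⟨y, hy, rfl⟩, hjk y (hbT b hb hy)⟩
      have hpreinj : ∀ a ∈ M, ∀ b ∈ M, a.image k = b.image k → a = b := by
        intro a ha b hb h
        rw [← hpre a ha, ← hpre b hb, h]
      refine ⟨⟨M.image (fun b => b.image k), ?_, ?_, ?_, ?_⟩, ?_⟩
      · rw [Finset.card_image_of_injOn hpreinj, hc]
      · intro b hb
        obtain ⟨s, hs, rfl⟩ := Finset.mem_image.1 hb
        have : (s.image k).map jE = s := hpre s hs
        have hcm : ((s.image k).map jE).card = s.card := by rw [this]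
        rw [Finset.card_map] at hcm
        rw [hcm]
        exact h2 s hs
      · intro a ha b hb hab
        obtain ⟨s, hs, rfl⟩ := Finset.mem_image.1 ha
        obtain ⟨t, ht, rfl⟩ := Finset.mem_image.1 hb
        have hst : s ≠ t := fun h => hab (by rw [h])
        have hd := hpd s hs t ht hst
        rw [Finset.disjoint_left]
        intro i hi hit
        obtain ⟨x, hx, rfl⟩ := Finset.mem_image.1 hi
        obtain ⟨y, hy, hky⟩ := Finset.mem_image.1 hit
        have : y = x := by
          have := congrArg j hky
          rw [hjk y (hbT t ht hy), hjk x (hbT s hs hx)] at this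
          exact this
        subst this
        exact (Finset.disjoint_left.1 hd hx) hy
      · apply le_antisymm
        · exact Finset.sup_le fun b _ => le_top
        · intro i _
          rw [Finset.mem_sup]
          have : j i ∈ T := hjT i
          rw [← hsup, Finset.mem_sup] at this
          obtain ⟨b, hb, hjb⟩ := this
          exact ⟨b.image k, Finset.mem_image.2 ⟨b, hb, rfl⟩,
            by rw [id]; exact Finset.mem_image.2 ⟨j i, hjb, hkj i⟩⟩
      · apply Subtype.ext
        show (M.image (fun b => b.image k)).map _ = M
        rw [Finset.map_eq_image, Finset.image_image]
        calc M.image _ = M.image id := Finset.image_congr (fun b hb => hpre b hb)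
        _ = M := Finset.image_id
  calc Nat.card _ = Nat.card {Q : Finset (Finset (Fin 6)) //
      Q.card = 3 ∧ (∀ b ∈ Q, b.card = 2) ∧ PDj Q ∧ Q.sup id = univ} :=
        (Nat.card_congr (Equiv.ofBijective _ hbij)).symm
  _ = 15 := card_match6

lemma card_B3_aux :
    Nat.card {Q : Finset (Finset (Fin n)) //
      Q.card = 3 ∧ (∀ b ∈ Q, b.card = 2) ∧ PDj Q} = 15 * n.choose 6 := by
  classical
  have hsupcard : ∀ Q : Finset (Finset (Fin n)),
      Q.card = 3 → (∀ b ∈ Q, b.card = 2) → PDj Q → (Q.sup id).card = 6 := by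
    intro Q hc h2 hpd
    rw [Finset.sup_eq_biUnion, Finset.card_biUnion (t := id) hpd]
    simp only [id_eq]
    rw [Finset.sum_congr rfl (fun b hb => h2 b hb), Finset.sum_const, hc]
    rfl
  have e : {Q : Finset (Finset (Fin n)) //
      Q.card = 3 ∧ (∀ b ∈ Q, b.card = 2) ∧ PDj Q} ≃
      Σ T : {T : Finset (Fin n) // T.card = 6},
        {Q : Finset (Finset (Fin n)) //
          Q.card = 3 ∧ (∀ b ∈ Q, b.card = 2) ∧ PDj Q ∧ Q.sup id = T.1} :=
    { toFun := fun Q => ⟨⟨Q.1.sup id, hsupcard Q.1 Q.2.1 Q.2.2.1 Q.2.2.2⟩,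
        ⟨Q.1, Q.2.1, Q.2.2.1, Q.2.2.2, rfl⟩⟩
      invFun := fun x => ⟨x.2.1, x.2.2.1, x.2.2.2.1, x.2.2.2.2.1⟩
      left_inv := fun Q => rfl
      right_inv := by
        rintro ⟨⟨T, hT⟩, Q2⟩
        exact Sigma.subtype_ext (Subtype.ext Q2.2.2.2.2) rfl }
  rw [Nat.card_congr e, Nat.card_eq_fintype_card, Fintype.card_sigma]
  have hfib : ∀ T : {T : Finset (Fin n) // T.card = 6},
      Fintype.card {Q : Finset (Finset (Fin n)) //
        Q.card = 3 ∧ (∀ b ∈ Q, b.card = 2) ∧ PDj Q ∧ Q.sup id = T.1} = 15 := by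
    intro T
    rw [← Nat.card_eq_fintype_card]
    exact card_matchT T.1 T.2
  rw [Finset.sum_congr rfl (fun T _ => hfib T), Finset.sum_const, smul_eq_mul,
    Finset.card_univ, card_setsOfCard]
  exact Nat.mul_comm _ _

lemma card_B3 (hm : 2 ≤ m) : Nat.card (B3T m n) = 15 * n.choose 6 := by
  have e : B3T m n ≃ {Q : Finset (Finset (Fin n)) //
      Q.card = 3 ∧ (∀ b ∈ Q, b.card = 2) ∧ PDj Q} :=
    Equiv.subtypeEquivRight (fun Q => by tauto)
  rw [Nat.card_congr e, card_B3_aux]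

lemma I2 (hn : 4 ≤ n) : n.choose 3 * (n - 3).choose 2 = 10 * n.choose 5 := by
  rcases Nat.lt_or_ge n 5 with h5 | h5
  · have hn4 : n = 4 := by omega
    subst hn4
    norm_num
  · have := Nat.choose_mul (n := n) (k := 5) (s := 3) (by norm_num)
    have h53 : (5 : ℕ).choose 3 = 10 := by decide
    rw [h53] at this
    have h52 : (5 : ℕ) - 3 = 2 := by norm_num
    rw [h52] at this
    omega

lemma key_arith (hn : 4 ≤ n) :
    750 * ((n - 2) * (n - 3)) = 1500 + 3000 * (n - 4) + 750 * ((n - 4) * (n - 5)) := by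
  obtain ⟨t, rfl⟩ := Nat.exists_eq_add_of_le hn
  have e2 : 4 + t - 2 = t + 2 := by omega
  have e3 : 4 + t - 3 = t + 1 := by omega
  have e4 : 4 + t - 4 = t := by omega
  rw [e2, e3, e4]
  cases t with
  | zero => norm_num
  | succ s =>
    have e5 : 4 + (s + 1) - 5 = s := by omega
    rw [e5]
    ring

lemma J (hn : 4 ≤ n) :
    n.choose 4 + 10 * n.choose 5 + 15 * n.choose 6 = n.choose 4 * (n - 2).choose 2 := by
  have h5 := Nat.choose_succ_right_eq n 4
  have h6 := Nat.choose_succ_right_eq n 5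
  have h2 := Nat.choose_succ_right_eq (n - 2) 1
  rw [Nat.choose_one_right] at h2
  have e1 : n - 2 - 1 = n - 3 := by omega
  rw [e1] at h2
  norm_num at h5 h6 h2
  apply Nat.eq_of_mul_eq_mul_left (show 0 < 1500 by norm_num)
  have key := key_arith (n := n) hn
  calc 1500 * (n.choose 4 + 10 * n.choose 5 + 15 * n.choose 6)
      = 1500 * n.choose 4 + 3000 * (n.choose 5 * 5) + 3750 * (n.choose 6 * 6) := by ring
    _ = 1500 * n.choose 4 + 3000 * (n.choose 4 * (n - 4)) + 3750 * (n.choose 5 * (n - 5)) := by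
        rw [h5, h6]
    _ = 1500 * n.choose 4 + 3000 * (n.choose 4 * (n - 4)) + 750 * ((n.choose 5 * 5) * (n - 5)) := by
        ring
    _ = 1500 * n.choose 4 + 3000 * (n.choose 4 * (n - 4))
          + 750 * ((n.choose 4 * (n - 4)) * (n - 5)) := by rw [h5]
    _ = n.choose 4 * (1500 + 3000 * (n - 4) + 750 * ((n - 4) * (n - 5))) := by ring
    _ = n.choose 4 * (750 * ((n - 2) * (n - 3))) := by rw [← key]
    _ = 750 * (n.choose 4 * ((n - 2) * (n - 3))) := by ring
    _ = 750 * (n.choose 4 * ((n - 2).choose 2 * 2)) := by rw [h2]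
    _ = 1500 * (n.choose 4 * (n - 2).choose 2) := by ring


theorem restStirling_sub_three (m n : ℕ) (hn : 4 ≤ n) :
    (4 ≤ m → restStirling m n (n - 3) = n.choose 4 * (n - 2).choose 2) ∧
    restStirling 3 n (n - 3) = 15 * n.choose 6 + 10 * n.choose 5 ∧
    restStirling 2 n (n - 3) = 15 * n.choose 6 := by
  refine ⟨?_, ?_, ?_⟩
  · intro hm
    have h1 : restStirling m n (n - 3) = Nat.card (AT m n (n - 3)) := rfl
    rw [h1, card_AT_eq_BT hn (by omega), card_BT hn, card_B1_big hm, card_B2_big (by omega),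
      card_B3 (by omega), I2 hn, ← J hn]
    ring
  · have h1 : restStirling 3 n (n - 3) = Nat.card (AT 3 n (n - 3)) := rfl
    rw [h1, card_AT_eq_BT hn (by omega), card_BT hn, card_B1_small (by omega),
      card_B2_big (le_refl 3), card_B3 (by omega), I2 hn]
    ring
  · have h1 : restStirling 2 n (n - 3) = Nat.card (AT 2 n (n - 3)) := rfl
    rw [h1, card_AT_eq_BT hn (by omega), card_BT hn, card_B1_small (by omega),
      card_B2_small (by omega), card_B3 (le_refl 2)]
    ring
end

section
/- For any prime p, any m ≥ 2, and any k ≥ 2, the associated Stirling number satisfies S≥m(p, k) ≡ 0 (mod p); moreover S≥m(p, 1) = 1 for m ≤ p. -/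
open Finset MulAction Pointwise

namespace AssocAux

variable {n : ℕ}

/-- order iso of finsets induced by a permutation -/
def permIso (σ : Equiv.Perm (Fin n)) : Finset (Fin n) ≃o Finset (Fin n) where
  toEquiv := σ.finsetCongr
  map_rel_iff' := by
    intro s t
    simp [Equiv.finsetCongr_apply, Finset.map_subset_map]

instance : Finite (Finpartition (Finset.univ : Finset (Fin n))) :=
  Finite.of_injective (fun P => P.parts) fun P Q h => Finpartition.ext h

instance : MulAction (Equiv.Perm (Fin n)) (Finpartition (Finset.univ : Finset (Fin n))) where
  smul σ P := (P.map (permIso σ)).copy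
    (by simp [permIso, Equiv.finsetCongr_apply, Finset.map_univ_equiv])
  one_smul P := by
    apply Finpartition.ext
    show P.parts.map ((1 : Equiv.Perm (Fin n)).finsetCongr).toEmbedding = P.parts
    rw [Equiv.Perm.one_def, Equiv.finsetCongr_refl, Equiv.refl_toEmbedding, Finset.map_refl]
  mul_smul σ τ P := by
    apply Finpartition.ext
    show P.parts.map _ = (P.parts.map _).map _
    rw [Finset.map_map]
    congr 1
    ext s x
    show x ∈ s.map (σ * τ : Equiv.Perm (Fin n)).toEmbedding ↔
      x ∈ (s.map τ.toEmbedding).map σ.toEmbedding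
    simp only [Finset.map_map, Finset.mem_map, Function.Embedding.trans_apply,
      Equiv.coe_toEmbedding, Equiv.Perm.mul_apply]

lemma smul_parts (σ : Equiv.Perm (Fin n)) (P : Finpartition (Finset.univ : Finset (Fin n))) :
    (σ • P).parts = P.parts.map σ.finsetCongr.toEmbedding := rfl

instance (m k : ℕ) : MulAction (Equiv.Perm (Fin n))
    {P : Finpartition (Finset.univ : Finset (Fin n)) //
      P.parts.card = k ∧ ∀ b ∈ P.parts, m ≤ b.card} where
  smul σ P := ⟨σ • P.1, by
    obtain ⟨P, hk, hm⟩ := P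
    refine ⟨by rw [smul_parts, Finset.card_map, hk], ?_⟩
    intro b hb
    rw [smul_parts, Finset.mem_map] at hb
    obtain ⟨a, ha, rfl⟩ := hb
    simpa [Equiv.coe_toEmbedding, Equiv.finsetCongr_apply, Finset.card_map] using hm a ha⟩
  one_smul P := Subtype.ext (one_smul _ _)
  mul_smul σ τ P := Subtype.ext (mul_smul σ τ P.1)

lemma orderOf_finRotate {n : ℕ} (h : 2 ≤ n) : orderOf (finRotate n) = n := by
  rw [← Equiv.Perm.lcm_cycleType, cycleType_finRotate_of_le h]
  simp

open Fin.NatCast Fin.CommRing in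
lemma closed_univ {n : ℕ} {b : Finset (Fin (n + 1))} (hb : b.Nonempty)
    (hc : ∀ x ∈ b, x + 1 ∈ b) : b = Finset.univ := by
  obtain ⟨x, hx⟩ := hb
  have key : ∀ j : ℕ, x + (j : Fin (n + 1)) ∈ b := by
    intro j
    induction j with
    | zero => simpa using hx
    | succ j ih =>
      have := hc _ ih
      have e : x + ((j + 1 : ℕ) : Fin (n + 1)) = x + (j : Fin (n + 1)) + 1 := by
        push_cast; ring
      rwa [e]
  apply Finset.eq_univ_of_forall
  intro y
  have := key (y - x).val
  rwa [Fin.cast_val_eq_self, show x + (y - x) = y by ring] at this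

end AssocAux

open AssocAux in
theorem assocStirling_prime (p : ℕ) (hp : p.Prime) (m : ℕ) (hm : 2 ≤ m) :
    (∀ k, 2 ≤ k → p ∣ assocStirling m p k) ∧ (m ≤ p → assocStirling m p 1 = 1) := by
  have hp2 := hp.two_le
  constructor
  · intro k hk
    obtain ⟨n, rfl⟩ : ∃ n, p = n + 1 := ⟨p - 1, by omega⟩
    have : Fact (n + 1).Prime := ⟨hp⟩
    set c := finRotate (n + 1) with hc
    set G := Subgroup.zpowers c with hGdef
    have hG : IsPGroup (n + 1) G :=
      IsPGroup.of_card (by rw [Nat.card_zpowers, orderOf_finRotate hp2, pow_one])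
    set S := {P : Finpartition (Finset.univ : Finset (Fin (n + 1))) //
      P.parts.card = k ∧ ∀ b ∈ P.parts, m ≤ b.card} with hSdef
    rw [assocStirling, ← Nat.modEq_zero_iff_dvd]
    have hempty : IsEmpty (fixedPoints G S) := by
      constructor
      rintro ⟨⟨P, hkP, hmP⟩, hfix⟩
      simp only [mem_fixedPoints] at hfix
      -- every power of c maps parts to parts
      have hpart : ∀ (g : G) (b : Finset (Fin (n + 1))), b ∈ P.parts →
          b.image (g : Equiv.Perm (Fin (n + 1))) ∈ P.parts := by
        intro g b hb
        have h2 : ((g : Equiv.Perm (Fin (n + 1))) • P) = P :=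
          congrArg Subtype.val (hfix g)
        have h3 : P.parts.map ((g : Equiv.Perm (Fin (n + 1))).finsetCongr).toEmbedding
            = P.parts := by rw [← smul_parts, h2]
        rw [← h3]
        rw [Finset.mem_map]
        refine ⟨b, hb, ?_⟩
        ext x
        simp only [Equiv.coe_toEmbedding, Equiv.finsetCongr_apply, Finset.mem_map,
          Finset.mem_image, Finset.mem_map_equiv]
      -- get a part
      have hne : P.parts.Nonempty := P.parts_nonempty (by
        rw [Finset.bot_eq_empty]; exact Finset.univ_nonempty.ne_empty)
      obtain ⟨b, hb⟩ := hne
      have hbne : b.Nonempty := P.nonempty_of_mem_parts hb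
      by_cases himg : b.image c = b
      · -- b is invariant, so b = univ, so only one part
        have hbu : b = Finset.univ := by
          apply closed_univ hbne
        -- closed under +1
          intro x hx
          have : c x ∈ b := himg ▸ Finset.mem_image_of_mem c hx
          rwa [hc, finRotate_succ_apply] at this
        have hone : P.parts = {Finset.univ} := by
          rw [Finset.eq_singleton_iff_unique_mem]
          refine ⟨hbu ▸ hb, ?_⟩
          intro b' hb'
          obtain ⟨x, hx⟩ := P.nonempty_of_mem_parts hb'
          exact P.eq_of_mem_parts hb' (hbu ▸ hb) hx (Finset.mem_univ x)
        rw [hone] at hkP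
        simp at hkP
        omega
      · -- b has trivial stabilizer: p disjoint parts of size ≥ m
        set H := stabilizer G b with hH
        have hdvd : Nat.card H ∣ n + 1 := by
          have := Subgroup.card_subgroup_dvd_card H
          rwa [Nat.card_zpowers, orderOf_finRotate hp2] at this
        rcases (Nat.Prime.eq_one_or_self_of_dvd hp _ hdvd) with h1 | h1
        · -- stabilizer trivial
          have hbot : H = ⊥ := Subgroup.eq_bot_of_card_eq _ h1
          have hinj : Function.Injective (fun g : G => g • b) := by
            intro g g' hgg'
            simp only at hgg'
            have : (g'⁻¹ * g) • b = b := by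
              rw [mul_smul, hgg', ← mul_smul, inv_mul_cancel, one_smul]
            have : g'⁻¹ * g ∈ H := this
            rw [hbot, Subgroup.mem_bot] at this
            exact (inv_mul_eq_one.mp this).symm
          have : Fintype G := Fintype.ofFinite _
          set O : Finset (Finset (Fin (n + 1))) := Finset.univ.image (fun g : G => g • b) with hO
          have hOcard : O.card = n + 1 := by
            rw [hO, Finset.card_image_of_injective _ hinj, Finset.card_univ,
              ← Nat.card_eq_fintype_card, hGdef, Nat.card_zpowers, orderOf_finRotate hp2]
          have hOsub : O ⊆ P.parts := by
            intro t ht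
            rw [hO, Finset.mem_image] at ht
            obtain ⟨g, _, rfl⟩ := ht
            have : g • b = b.image (g : Equiv.Perm (Fin (n + 1))) := by
              ext x
              rw [Finset.mem_smul_finset, Finset.mem_image]
              exact Iff.rfl
            rw [this]
            exact hpart g b hb
          have hsum : ∑ t ∈ P.parts, t.card = n + 1 := by
            rw [P.sum_card_parts]; simp
          have h2 : O.card * m ≤ ∑ t ∈ O, t.card := by
            have := Finset.card_nsmul_le_sum O (fun t => t.card) m
              (fun t ht => hmP t (hOsub ht))
            simpa using this
          have h3 : ∑ t ∈ O, t.card ≤ ∑ t ∈ P.parts, t.card :=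
            Finset.sum_le_sum_of_subset hOsub
          rw [hOcard] at h2
          rw [hsum] at h3
          nlinarith
        · -- stabilizer full: contradiction with himg
          have htop : H = ⊤ := Subgroup.eq_top_of_card_eq _ (by
            rw [h1, hGdef, Nat.card_zpowers, orderOf_finRotate hp2])
          have hcH : (⟨c, Subgroup.mem_zpowers c⟩ : G) ∈ H := htop ▸ Subgroup.mem_top _
          have hstab : (⟨c, Subgroup.mem_zpowers c⟩ : G) • b = b := hcH
          apply himg
          have e : b.image c = (⟨c, Subgroup.mem_zpowers c⟩ : G) • b := by
            ext x
            rw [Finset.mem_image, Finset.mem_smul_finset]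
            exact Iff.rfl
          rw [e, hstab]
    have h := hG.card_modEq_card_fixedPoints S
    rw [Nat.card_of_isEmpty (α := fixedPoints (↥G) S)] at h
    exact h
  · intro hmp
    have hne : (Finset.univ : Finset (Fin p)).Nonempty := by
      refine ⟨⟨0, by omega⟩, Finset.mem_univ _⟩
    rw [assocStirling, Nat.card_eq_one_iff_unique]
    constructor
    · constructor
      rintro ⟨P, hP1, _⟩ ⟨Q, hQ1, _⟩
      have key : ∀ (R : Finpartition (Finset.univ : Finset (Fin p))),
          R.parts.card = 1 → R.parts = {Finset.univ} := by
        intro R hR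
        obtain ⟨t, ht⟩ := Finset.card_eq_one.mp hR
        have h2 := R.sup_parts
        rw [ht, Finset.sup_singleton] at h2
        simp only [id_eq] at h2
        rw [ht, h2]
      apply Subtype.ext
      apply Finpartition.ext
      rw [key P hP1, key Q hQ1]
    · refine ⟨⟨Finpartition.indiscrete (by simpa using hne.ne_empty), ?_, ?_⟩⟩
      · simp [Finpartition.indiscrete]
      · intro b hb
        simp only [Finpartition.indiscrete_parts, Finset.mem_singleton] at hb
        subst hb
        simpa using hmp
end

section
/- Let μ ≤ 0 be an integer, m ≥ 1, and p a prime with p > m. Define the restricted poly-Bernoulli number B^{(μ)}_{n,≤m} = ∑_{k=0}^{n} (−1)^{n−k} · k! · (k+1)^{|μ|} · S≤m(n, k). Then B^{(μ)}_{p,≤m} ≡ 0 (mod p). -/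
open Finset

section PMap

variable {α β γ : Type*} [DecidableEq α] [DecidableEq β] [DecidableEq γ]
  [Fintype α] [Fintype β] [Fintype γ]

/-- Order isomorphism of finset lattices induced by an equiv. -/
def finsetOrderIso (e : α ≃ β) : Finset α ≃o Finset β where
  toEquiv := e.finsetCongr
  map_rel_iff' := Finset.map_subset_map

/-- Transport a finpartition of `univ` along an equiv. -/
def pmap (e : α ≃ β) (P : Finpartition (Finset.univ : Finset α)) :
    Finpartition (Finset.univ : Finset β) :=
  (P.map (finsetOrderIso e)).copy (Finset.map_univ_equiv e)

lemma pmap_parts (e : α ≃ β) (P : Finpartition (Finset.univ : Finset α)) :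
    (pmap e P).parts = P.parts.map ⟨fun s => s.map e.toEmbedding,
      fun s t h => by simpa using congrArg (Finset.map e.symm.toEmbedding) h⟩ := by
  classical
  simp only [pmap, Finpartition.copy_parts, Finpartition.parts_map]
  rfl

lemma pmap_refl (P : Finpartition (Finset.univ : Finset α)) :
    pmap (Equiv.refl α) P = P := by
  ext s
  simp [pmap_parts]

lemma pmap_trans (e : α ≃ β) (f : β ≃ γ) (P : Finpartition (Finset.univ : Finset α)) :
    pmap f (pmap e P) = pmap (e.trans f) P := by
  ext s
  simp only [pmap_parts, Finset.mem_map, Function.Embedding.coeFn_mk]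
  constructor
  · rintro ⟨t, ⟨u, hu, rfl⟩, rfl⟩
    exact ⟨u, hu, by show Finset.map _ u = Finset.map f.toEmbedding (Finset.map e.toEmbedding u); rw [Finset.map_map]; rfl⟩
  · rintro ⟨u, hu, rfl⟩
    exact ⟨u.map e.toEmbedding, ⟨u, hu, rfl⟩, by show Finset.map f.toEmbedding (Finset.map e.toEmbedding u) = _; rw [Finset.map_map]; rfl⟩

lemma pmap_parts_card (e : α ≃ β) (P : Finpartition (Finset.univ : Finset α)) :
    (pmap e P).parts.card = P.parts.card := by
  rw [pmap_parts, Finset.card_map]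

lemma pmap_mem_parts {e : α ≃ β} {P : Finpartition (Finset.univ : Finset α)}
    {b : Finset β} (hb : b ∈ (pmap e P).parts) :
    ∃ a ∈ P.parts, a.map e.toEmbedding = b := by
  rw [pmap_parts] at hb
  obtain ⟨a, ha, h⟩ := Finset.mem_map.mp hb
  exact ⟨a, ha, h⟩

end PMap

section Transfer

variable {α β : Type*} [DecidableEq α] [DecidableEq β] [Fintype α] [Fintype β]

/-- transport subtype of partitions along an equiv -/
def restEquiv (e : α ≃ β) (m k : ℕ) :
    {P : Finpartition (Finset.univ : Finset α) //
      P.parts.card = k ∧ ∀ b ∈ P.parts, b.card ≤ m} ≃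
    {P : Finpartition (Finset.univ : Finset β) //
      P.parts.card = k ∧ ∀ b ∈ P.parts, b.card ≤ m} where
  toFun P := ⟨pmap e P.1, by
    refine ⟨by rw [pmap_parts_card]; exact P.2.1, fun b hb => ?_⟩
    obtain ⟨a, ha, rfl⟩ := pmap_mem_parts hb
    simpa using P.2.2 a ha⟩
  invFun P := ⟨pmap e.symm P.1, by
    refine ⟨by rw [pmap_parts_card]; exact P.2.1, fun b hb => ?_⟩
    obtain ⟨a, ha, rfl⟩ := pmap_mem_parts hb
    simpa using P.2.2 a ha⟩
  left_inv P := by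
    ext1
    show pmap e.symm (pmap e P.1) = P.1
    rw [pmap_trans]
    simpa using pmap_refl P.1
  right_inv P := by
    ext1
    show pmap e (pmap e.symm P.1) = P.1
    rw [pmap_trans]
    simpa using pmap_refl P.1

end Transfer

lemma restStirling_eq_zmod (m p k : ℕ) [NeZero p] :
    restStirling m p k = Nat.card {P : Finpartition (Finset.univ : Finset (ZMod p)) //
      P.parts.card = k ∧ ∀ b ∈ P.parts, b.card ≤ m} := by
  have e : Fin p ≃ ZMod p := Fintype.equivOfCardEq (by simp [ZMod.card])
  exact Nat.card_congr (restEquiv e m k)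

section Action

variable (p m k : ℕ) [NeZero p]

abbrev RPart := {P : Finpartition (Finset.univ : Finset (ZMod p)) //
    P.parts.card = k ∧ ∀ b ∈ P.parts, b.card ≤ m}

def rsmul (g : ZMod p) (P : RPart p m k) : RPart p m k :=
  ⟨pmap (Equiv.addLeft g) P.1, by
    refine ⟨by rw [pmap_parts_card]; exact P.2.1, fun b hb => ?_⟩
    obtain ⟨a, ha, rfl⟩ := pmap_mem_parts hb
    simpa using P.2.2 a ha⟩

instance : MulAction (Multiplicative (ZMod p)) (RPart p m k) where
  smul g P := rsmul p m k g.toAdd P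
  one_smul P := by
    ext1
    show pmap (Equiv.addLeft ((1 : Multiplicative (ZMod p)).toAdd)) P.1 = P.1
    have : Equiv.addLeft ((1 : Multiplicative (ZMod p)).toAdd) = Equiv.refl (ZMod p) := by
      ext x; simp
    rw [this, pmap_refl]
  mul_smul g h P := by
    ext1
    show pmap (Equiv.addLeft (g * h).toAdd) P.1
      = pmap (Equiv.addLeft g.toAdd) (pmap (Equiv.addLeft h.toAdd) P.1)
    rw [pmap_trans]
    congr 1
    ext x
    simp [add_assoc]

end Action

lemma key_dvd (p m k : ℕ) [hp : Fact p.Prime] (hm : m < p) (hk0 : 0 < k) (hkp : k < p) :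
    p ∣ Nat.card (RPart p m k) := by
  haveI : NeZero p := ⟨hp.out.ne_zero⟩
  -- no fixed points
  have hfix : MulAction.fixedPoints (Multiplicative (ZMod p)) (RPart p m k) = ∅ := by
    rw [Set.eq_empty_iff_forall_notMem]
    rintro ⟨P, hPk, hPm⟩ hfixP
    -- pick a block
    obtain ⟨b, hb⟩ : P.parts.Nonempty := Finset.card_pos.mp (hPk ▸ hk0)
    -- the map g ↦ b + g lands in parts and is injective
    have hmem : ∀ g : ZMod p, b.map (Equiv.addLeft g).toEmbedding ∈ P.parts := by
      intro g
      have := hfixP (Multiplicative.ofAdd g)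
      have h2 : pmap (Equiv.addLeft g) P = P := congrArg Subtype.val this
      rw [show P.parts = (pmap (Equiv.addLeft g) P).parts from by rw [h2], pmap_parts]
      exact Finset.mem_map_of_mem _ hb
    have hinj : Function.Injective
        (fun g : ZMod p => b.map (Equiv.addLeft g).toEmbedding) := by
      intro g₁ g₂ hgg
      by_contra hne
      simp only at hgg
      set h := g₁ - g₂ with hh
      have hh0 : h ≠ 0 := sub_ne_zero.mpr hne
      have hmemiff : ∀ y : ZMod p, -g₁ + y ∈ b ↔ -g₂ + y ∈ b := by
        intro y
        have h1 : y ∈ b.map (Equiv.addLeft g₁).toEmbedding ↔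
            y ∈ b.map (Equiv.addLeft g₂).toEmbedding := by rw [hgg]
        simpa [Finset.mem_map_equiv] using h1
      have hinv : b.map (Equiv.addLeft h).toEmbedding = b := by
        ext y
        rw [Finset.mem_map_equiv]
        have h2 := hmemiff (y + g₂)
        have e1 : -g₁ + (y + g₂) = (Equiv.addLeft h).symm y := by
          simp [hh]; ring
        have e2 : -g₂ + (y + g₂) = y := by ring
        rw [e1, e2] at h2
        exact h2
      have hstep : ∀ x ∈ b, h + x ∈ b := by
        intro x hx
        have hx2 : (Equiv.addLeft h) x ∈ b.map (Equiv.addLeft h).toEmbedding :=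
          Finset.mem_map_of_mem _ hx
        rw [hinv] at hx2
        simpa using hx2
      have hiter : ∀ n : ℕ, ∀ x ∈ b, (n : ZMod p) * h + x ∈ b := by
        intro n
        induction n with
        | zero => intro x hx; simpa using hx
        | succ n ih =>
          intro x hx
          have h3 := hstep _ (ih x hx)
          have heq : ((n : ℕ) + 1 : ZMod p) * h + x = h + ((n : ZMod p) * h + x) := by ring
          rw [Nat.cast_add, Nat.cast_one, heq]
          exact h3
      have hbne : b.Nonempty :=
        Finset.nonempty_iff_ne_empty.mpr (fun h0 => P.bot_notMem (by rw [Finset.bot_eq_empty, ← h0]; exact hb : (⊥ : Finset (ZMod p)) ∈ P.parts))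
      obtain ⟨x, hx⟩ := hbne
      have hbuniv : b = Finset.univ := by
        ext y
        simp only [Finset.mem_univ, iff_true]
        have h4 : ((((y - x) * h⁻¹).val : ℕ) : ZMod p) * h + x = y := by
          rw [ZMod.natCast_val, ZMod.cast_id]
          field_simp
          ring
        rw [← h4]
        exact hiter _ x hx
      have h5 : b.card ≤ m := hPm b hb
      rw [hbuniv] at h5
      simp only [Finset.card_univ, Fintype.card_eq_nat_card] at h5
      rw [Nat.card_zmod] at h5
      omega
    -- so parts has at least p elements
    have h6 : p ≤ P.parts.card := by
      have h7 := Finset.card_le_card_of_injOn (s := (Finset.univ : Finset (ZMod p)))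
        (fun g : ZMod p => b.map (Equiv.addLeft g).toEmbedding)
        (fun g _ => hmem g) (hinj.injOn)
      simpa [ZMod.card] using h7
    omega
  have hcongr := IsPGroup.card_modEq_card_fixedPoints (p := p)
    (G := Multiplicative (ZMod p))
    (IsPGroup.of_card (n := 1) (by
      rw [pow_one]
      simp [Nat.card_eq_fintype_card, ZMod.card]))
    (RPart p m k)
  rw [hfix] at hcongr
  have h8 : Nat.card (∅ : Set (RPart p m k)) = 0 := by simp
  rw [h8, Nat.card_eq_fintype_card] at hcongr
  rw [Nat.card_eq_fintype_card]
  exact (Nat.modEq_zero_iff_dvd).mp hcongr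

lemma restStirling_p_zero (m p : ℕ) (hp0 : 0 < p) : restStirling m p 0 = 0 := by
  haveI : IsEmpty {P : Finpartition (Finset.univ : Finset (Fin p)) //
      P.parts.card = 0 ∧ ∀ b ∈ P.parts, b.card ≤ m} := by
    constructor
    rintro ⟨P, hP0, -⟩
    have hparts : P.parts = ∅ := Finset.card_eq_zero.mp hP0
    have h1 : (Finset.univ : Finset (Fin p)) = ⊥ := by
      rw [← P.sup_parts, hparts]
      simp
    have h2 : (⟨0, hp0⟩ : Fin p) ∈ (Finset.univ : Finset (Fin p)) := Finset.mem_univ _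
    rw [h1] at h2
    simp at h2
  simp only [restStirling]
  exact Nat.card_of_isEmpty

theorem restPolyBernoulli_prime_mod (μ : ℤ) (hμ : μ ≤ 0) (p m : ℕ) (hp : p.Prime)
    (hm : 1 ≤ m) (hmp : m < p) :
    (∑ k ∈ Finset.range (p + 1),
        (-1 : ℤ) ^ (p - k) * k.factorial * (k + 1) ^ μ.natAbs * restStirling m p k) ≡
      0 [ZMOD p] := by
  haveI : Fact p.Prime := ⟨hp⟩
  haveI : NeZero p := ⟨hp.ne_zero⟩
  rw [Int.modEq_zero_iff_dvd]
  apply Finset.dvd_sum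
  intro k hk
  rw [Finset.mem_range] at hk
  rcases Nat.eq_zero_or_pos k with rfl | hk0
  · rw [restStirling_p_zero m p hp.pos]
    simp
  rcases eq_or_lt_of_le (Nat.lt_succ_iff.mp hk) with hkp | hkp
  · -- k = p : p divides p!
    have h1 : (p : ℤ) ∣ (k.factorial : ℤ) :=
      Int.natCast_dvd_natCast.mpr (Nat.dvd_factorial hp.pos (le_of_eq hkp.symm))
    exact Dvd.dvd.mul_right (Dvd.dvd.mul_right ((h1).mul_left _) _) _
  · -- 0 < k < p : p divides restStirling m p k
    have h1 : p ∣ restStirling m p k := by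
      rw [restStirling_eq_zmod]
      exact key_dvd p m k hmp hk0 hkp
    exact Dvd.dvd.mul_left (Int.natCast_dvd_natCast.mpr h1) _
end

section
/- As formal power series over ℚ in t, ∑_{n=0}^∞ B^{(μ)}_{n,≤m} t^n/n! · (1 − E_m(−t)) = Li_μ(1 − E_m(−t)), where B^{(μ)}_{n,≤m} = ∑_{k=0}^{n} (−1)^{n−k} k!/(k+1)^μ · S≤m(n, k), E_m(x) = ∑_{j=0}^m x^j/j!, and Li_μ(z) = ∑_{j≥1} z^j/j^μ composed formally with the series 1 − E_m(−t) (which has zero constant term). -/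
/-- `E_m(x) = ∑_{j=0}^m x^j/j!`, the m-th partial sum of the exponential series. -/
noncomputable def Em (m : ℕ) : PowerSeries ℚ :=
  PowerSeries.mk fun j => if j ≤ m then 1 / j.factorial else 0

/-- Formal composition `Li_μ(f) = ∑_{j≥1} f^j / j^μ`, well defined coefficientwise
when `f` has zero constant term (then `coeff n (f^j) = 0` for `j > n`). -/
noncomputable def Li (μ : ℕ) (f : PowerSeries ℚ) : PowerSeries ℚ :=
  PowerSeries.mk fun n => ∑ j ∈ Finset.Icc 1 n, PowerSeries.coeff n (f ^ j) / (j : ℚ) ^ μ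

/-- Restricted poly-Bernoulli numbers. -/
noncomputable def restPolyBernoulli (μ m n : ℕ) : ℚ :=
  ∑ k ∈ Finset.range (n + 1),
    (-1 : ℚ) ^ (n - k) * k.factorial / (k + 1) ^ μ * restStirling m n k

open Finset PowerSeries

/-- `E_m(t) - 1 = ∑_{j=1}^m t^j/j!`. -/
noncomputable def gser (m : ℕ) : PowerSeries ℚ :=
  PowerSeries.mk fun j => if 1 ≤ j ∧ j ≤ m then 1 / j.factorial else 0

/-- tuples of `k` pairwise disjoint blocks covering `s`, each of size in `[1,m]`. -/
def TCond (m : ℕ) {α : Type*} {k : ℕ} (s : Finset α) (c : Fin k → Finset α) : Prop :=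
  (∀ i, 1 ≤ (c i).card ∧ (c i).card ≤ m) ∧ (∀ i j, i ≠ j → Disjoint (c i) (c j)) ∧
    ∀ x, x ∈ s ↔ ∃ i, x ∈ c i

noncomputable def Ncnt (m : ℕ) {α : Type*} (s : Finset α) (k : ℕ) : ℕ :=
  Nat.card {c : Fin k → Finset α // TCond m s c}

lemma exists_snoc_iff {k : ℕ} {P : Fin (k+1) → Prop} :
    (∃ i, P i) ↔ (∃ i : Fin k, P i.castSucc) ∨ P (Fin.last k) := by
  constructor
  · rintro ⟨i, hi⟩
    rcases Fin.eq_castSucc_or_eq_last i with ⟨j, rfl⟩ | rfl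
    · exact Or.inl ⟨j, hi⟩
    · exact Or.inr hi
  · rintro (⟨i, hi⟩ | h)
    exacts [⟨_, hi⟩, ⟨_, h⟩]

lemma Ncnt_zero (m : ℕ) {α : Type*} [DecidableEq α] (s : Finset α) :
    Ncnt m s 0 = if s = ∅ then 1 else 0 := by
  unfold Ncnt
  split_ifs with h
  · subst h
    have : Unique {c : Fin 0 → Finset α // TCond m ∅ c} := by
      refine ⟨⟨⟨fun i => i.elim0, ?_, ?_, ?_⟩⟩, ?_⟩
      · exact fun i => i.elim0
      · exact fun i => i.elim0
      · simp
      · rintro ⟨c, hc⟩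
        ext i
        exact i.elim0
    exact Nat.card_unique
  · have : IsEmpty {c : Fin 0 → Finset α // TCond m s c} := by
      constructor
      rintro ⟨c, h1, h2, h3⟩
      obtain ⟨x, hx⟩ := Finset.nonempty_iff_ne_empty.2 h
      obtain ⟨i, -⟩ := (h3 x).1 hx
      exact i.elim0
    simp [Nat.card_of_isEmpty]

lemma Ncnt_succ (m : ℕ) {α : Type*} [DecidableEq α] [Fintype α] (s : Finset α) (k : ℕ) :
    Ncnt m s (k+1) =
      ∑ B ∈ (Finset.Icc 1 m).biUnion (fun j => s.powersetCard j), Ncnt m (s \ B) k := by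
  classical
  set ST := {B : Finset α // B ⊆ s ∧ 1 ≤ B.card ∧ B.card ≤ m} with hST
  have wd : ∀ (B : ST) (c : {c : Fin k → Finset α // TCond m (s \ (B : Finset α)) c}),
      TCond m s (Fin.snoc (c : Fin k → Finset α) (B : Finset α)) := by
    rintro ⟨B, hBs, hB1, hB2⟩ ⟨c, hc1, hc2, hc3⟩
    have hsub : ∀ i, c i ⊆ s \ B := fun i x hx => (hc3 x).2 ⟨i, hx⟩
    refine ⟨?_, ?_, ?_⟩
    · intro i
      refine Fin.lastCases ?_ ?_ i
      · simp only [Fin.snoc_last]; exact ⟨hB1, hB2⟩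
      · intro j; simpa using hc1 j
    · intro i j hij
      rcases Fin.eq_castSucc_or_eq_last i with ⟨i', rfl⟩ | rfl <;>
        rcases Fin.eq_castSucc_or_eq_last j with ⟨j', rfl⟩ | rfl
      · simp only [Fin.snoc_castSucc]
        exact hc2 i' j' (fun h => hij (by rw [h]))
      · simp only [Fin.snoc_castSucc, Fin.snoc_last]
        exact Finset.disjoint_left.2 fun x hx => (Finset.mem_sdiff.1 (hsub i' hx)).2
      · simp only [Fin.snoc_castSucc, Fin.snoc_last]
        exact (Finset.disjoint_left.2 fun x hx => (Finset.mem_sdiff.1 (hsub j' hx)).2).symm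
      · exact absurd rfl hij
    · intro x
      rw [exists_snoc_iff]
      simp only [Fin.snoc_castSucc, Fin.snoc_last]
      constructor
      · intro hx
        by_cases hxB : x ∈ B
        · exact Or.inr hxB
        · exact Or.inl ((hc3 x).1 (Finset.mem_sdiff.2 ⟨hx, hxB⟩))
      · rintro (⟨i, hi⟩ | h)
        · exact (Finset.mem_sdiff.1 (hsub i hi)).1
        · exact hBs h
  let Ψ : (Σ B : ST, {c : Fin k → Finset α // TCond m (s \ (B : Finset α)) c}) →
      {c : Fin (k+1) → Finset α // TCond m s c} :=
    fun p => ⟨Fin.snoc (p.2 : Fin k → Finset α) (p.1 : Finset α), wd p.1 p.2⟩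
  have hinj : Function.Injective Ψ := by
    rintro ⟨⟨B, hB⟩, ⟨c, hc⟩⟩ ⟨⟨B', hB'⟩, ⟨c', hc'⟩⟩ h
    simp only [Ψ, Subtype.mk.injEq] at h
    have hBB : B = B' := by
      have := congrFun h (Fin.last k); simpa using this
    subst hBB
    have hcc : c = c' := by
      funext i
      have := congrFun h i.castSucc; simpa using this
    subst hcc
    rfl
  have hsurj : Function.Surjective Ψ := by
    rintro ⟨d, hd1, hd2, hd3⟩
    have hBs : d (Fin.last k) ⊆ s := fun x hx => (hd3 x).2 ⟨_, hx⟩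
    have hdsub : ∀ i : Fin k, d i.castSucc ⊆ s \ d (Fin.last k) := by
      intro i x hx
      refine Finset.mem_sdiff.2 ⟨(hd3 x).2 ⟨_, hx⟩, fun hxB => ?_⟩
      exact Finset.disjoint_left.1
        (hd2 i.castSucc (Fin.last k) (Fin.castSucc_lt_last i).ne) hx hxB
    refine ⟨⟨⟨d (Fin.last k), hBs, (hd1 _).1, (hd1 _).2⟩,
      ⟨fun i => d i.castSucc, fun i => hd1 _, ?_, ?_⟩⟩, ?_⟩
    · intro i j hij
      exact hd2 _ _ (fun h => hij (Fin.castSucc_injective _ h))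
    · intro x
      constructor
      · intro hx
        obtain ⟨hxs, hxB⟩ := Finset.mem_sdiff.1 hx
        obtain ⟨i, hi⟩ := (hd3 x).1 hxs
        rcases Fin.eq_castSucc_or_eq_last i with ⟨i', rfl⟩ | rfl
        · exact ⟨i', hi⟩
        · exact absurd hi hxB
      · rintro ⟨i, hi⟩
        exact hdsub i hi
    · apply Subtype.ext
      funext i
      refine Fin.lastCases ?_ ?_ i
      · simp [Ψ]
      · intro j; simp [Ψ]
  have e := Equiv.ofBijective Ψ ⟨hinj, hsurj⟩
  have hmem : ∀ B : Finset α,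
      B ∈ (Finset.Icc 1 m).biUnion (fun j => s.powersetCard j) ↔
        (B ⊆ s ∧ 1 ≤ B.card ∧ B.card ≤ m) := by
    intro B
    simp only [Finset.mem_biUnion, Finset.mem_Icc, Finset.mem_powersetCard]
    constructor
    · rintro ⟨j, ⟨h1, h2⟩, hBs, rfl⟩
      exact ⟨hBs, h1, h2⟩
    · rintro ⟨hBs, h1, h2⟩
      exact ⟨B.card, ⟨h1, h2⟩, hBs, rfl⟩
  calc Ncnt m s (k+1)
      = Nat.card (Σ B : ST, {c : Fin k → Finset α // TCond m (s \ (B : Finset α)) c}) :=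
        (Nat.card_congr e).symm
    _ = ∑ B : ST, Ncnt m (s \ (B : Finset α)) k := by
        rw [Nat.card_eq_fintype_card, Fintype.card_sigma]
        simp [Ncnt, Nat.card_eq_fintype_card]
    _ = ∑ B ∈ (Finset.Icc 1 m).biUnion (fun j => s.powersetCard j), Ncnt m (s \ B) k := by
        rw [Finset.sum_subtype _ hmem (fun B => Ncnt m (s \ B) k)]

lemma Ncnt_formula (m : ℕ) {α : Type*} [DecidableEq α] [Fintype α] (k : ℕ) (s : Finset α) :
    (Ncnt m s k : ℚ) = s.card.factorial * PowerSeries.coeff s.card (gser m ^ k) := by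
  induction k generalizing s with
  | zero =>
    rw [Ncnt_zero, pow_zero, PowerSeries.coeff_one]
    by_cases h : s = ∅
    · simp [h]
    · have : s.card ≠ 0 := by simpa [Finset.card_eq_zero] using h
      simp [h, this]
  | succ k ih =>
    set n := s.card with hn
    have hdisj : (↑(Finset.Icc 1 m) : Set ℕ).PairwiseDisjoint
        (fun j => s.powersetCard j) := by
      intro a _ b _ hab
      simp only [Function.onFun, Finset.disjoint_left, Finset.mem_powersetCard]
      rintro B ⟨-, rfl⟩ ⟨-, h2⟩
      exact hab h2
    rw [Ncnt_succ, Nat.cast_sum, Finset.sum_biUnion hdisj]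
    have hinner : ∀ j ∈ Finset.Icc 1 m,
        ∑ B ∈ s.powersetCard j, (Ncnt m (s \ B) k : ℚ) =
          (n.choose j : ℚ) * ((n - j).factorial *
            PowerSeries.coeff (n - j) (gser m ^ k)) := by
      intro j hj
      have : ∀ B ∈ s.powersetCard j, (Ncnt m (s \ B) k : ℚ) =
          ((n - j).factorial : ℚ) * PowerSeries.coeff (n - j) (gser m ^ k) := by
        intro B hB
        obtain ⟨hBs, hBc⟩ := Finset.mem_powersetCard.1 hB
        rw [ih, Finset.card_sdiff_of_subset hBs, hBc]
      rw [Finset.sum_congr rfl this, Finset.sum_const, Finset.card_powersetCard, nsmul_eq_mul]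
    rw [Finset.sum_congr rfl hinner]
    have hcoeff : PowerSeries.coeff n (gser m ^ (k+1)) =
        ∑ j ∈ Finset.range (n+1),
          (if 1 ≤ j ∧ j ≤ m then (1:ℚ)/j.factorial else 0) *
            PowerSeries.coeff (n - j) (gser m ^ k) := by
      rw [pow_succ', PowerSeries.coeff_mul,
        Finset.Nat.sum_antidiagonal_eq_sum_range_succ
          (fun a b => PowerSeries.coeff a (gser m) * PowerSeries.coeff b (gser m ^ k))]
      simp [gser]
    rw [hcoeff, Finset.mul_sum]
    set T := (Finset.Icc 1 m).filter (· ≤ n) with hT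
    have h1 : ∑ j ∈ Finset.Icc 1 m, (n.choose j : ℚ) *
        ((n - j).factorial * PowerSeries.coeff (n - j) (gser m ^ k)) =
        ∑ j ∈ T, (n.choose j : ℚ) *
        ((n - j).factorial * PowerSeries.coeff (n - j) (gser m ^ k)) := by
      refine (Finset.sum_subset (Finset.filter_subset _ _) ?_).symm
      intro j hj hjT
      have : n < j := by
        by_contra h
        exact hjT (Finset.mem_filter.2 ⟨hj, not_lt.1 h⟩)
      rw [Nat.choose_eq_zero_of_lt this]
      simp
    have h2 : ∑ j ∈ Finset.range (n+1), (n.factorial : ℚ) *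
        ((if 1 ≤ j ∧ j ≤ m then (1:ℚ)/j.factorial else 0) *
          PowerSeries.coeff (n - j) (gser m ^ k)) =
        ∑ j ∈ T, (n.factorial : ℚ) *
        ((if 1 ≤ j ∧ j ≤ m then (1:ℚ)/j.factorial else 0) *
          PowerSeries.coeff (n - j) (gser m ^ k)) := by
      refine (Finset.sum_subset ?_ ?_).symm
      · intro j hj
        obtain ⟨hj1, hj2⟩ := Finset.mem_filter.1 hj
        exact Finset.mem_range.2 (Nat.lt_succ_of_le hj2)
      · intro j hj hjT
        have : ¬ (1 ≤ j ∧ j ≤ m) := by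
          intro hc
          exact hjT (Finset.mem_filter.2 ⟨Finset.mem_Icc.2 hc,
            Nat.lt_succ_iff.1 (Finset.mem_range.1 hj)⟩)
        simp [this]
    rw [h1, h2]
    refine Finset.sum_congr rfl ?_
    intro j hj
    obtain ⟨hj1, hjn⟩ := Finset.mem_filter.1 hj
    have hjn : j ≤ n := hjn
    rw [if_pos (Finset.mem_Icc.1 hj1), Nat.cast_choose ℚ hjn]
    have f1 : (j.factorial : ℚ) ≠ 0 := Nat.cast_ne_zero.2 (Nat.factorial_ne_zero j)
    have f2 : ((n - j).factorial : ℚ) ≠ 0 := Nat.cast_ne_zero.2 (Nat.factorial_ne_zero _)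
    field_simp

lemma Ncnt_eq_restStirling (m n k : ℕ) :
    Ncnt m (Finset.univ : Finset (Fin n)) k = k.factorial * restStirling m n k := by
  classical
  set PT := {P : Finpartition (Finset.univ : Finset (Fin n)) //
    P.parts.card = k ∧ ∀ b ∈ P.parts, b.card ≤ m} with hPT
  have wd : ∀ (P : PT) (e : Fin k ≃ ↥(P.1.parts)),
      TCond m (Finset.univ : Finset (Fin n)) (fun i => ((e i : Finset (Fin n)))) := by
    rintro ⟨P, hPk, hPm⟩ e
    refine ⟨?_, ?_, ?_⟩
    · intro i
      exact ⟨Finset.card_pos.2 (P.nonempty_of_mem_parts (e i).2), hPm _ (e i).2⟩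
    · intro i j hij
      have hne : ((e i : Finset (Fin n))) ≠ ((e j : Finset (Fin n))) := by
        intro h
        exact hij (e.injective (Subtype.ext h))
      exact P.disjoint (e i).2 (e j).2 hne
    · intro x
      simp only [Finset.mem_univ, true_iff]
      obtain ⟨t, ht, hxt⟩ := P.exists_mem (Finset.mem_univ x)
      refine ⟨e.symm ⟨t, ht⟩, ?_⟩
      simpa using hxt
  let Ψ : (Σ P : PT, (Fin k ≃ ↥(P.1.parts))) →
      {c : Fin k → Finset (Fin n) // TCond m (Finset.univ : Finset (Fin n)) c} :=
    fun p => ⟨fun i => ((p.2 i : Finset (Fin n))), wd p.1 p.2⟩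
  have himg : ∀ (P : PT) (e : Fin k ≃ ↥(P.1.parts)),
      P.1.parts = Finset.univ.image (fun i => ((e i : Finset (Fin n)))) := by
    intro P e
    ext b
    simp only [Finset.mem_image, Finset.mem_univ, true_and]
    constructor
    · intro hb
      exact ⟨e.symm ⟨b, hb⟩, by simp⟩
    · rintro ⟨i, rfl⟩
      exact (e i).2
  have hinj : Function.Injective Ψ := by
    rintro ⟨P, e⟩ ⟨P', e'⟩ h
    simp only [Ψ, Subtype.mk.injEq] at h
    have hPP : P = P' := by
      apply Subtype.ext
      apply Finpartition.ext
      rw [himg P e, himg P' e', h]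
    subst hPP
    have hee : e = e' := by
      apply Equiv.ext
      intro i
      exact Subtype.ext (congrFun h i)
    subst hee
    rfl
  have hsurj : Function.Surjective Ψ := by
    rintro ⟨c, h1, h2, h3⟩
    have hcinj : Function.Injective c := by
      intro i j h
      by_contra hij
      have hd := h2 i j hij
      rw [h] at hd
      have := disjoint_self.1 hd
      have hc := (h1 j).1
      rw [this] at hc
      simp at hc
    have hnotbot : ∀ i, c i ≠ ∅ := by
      intro i h
      have hc := (h1 i).1
      rw [h] at hc
      simp at hc
    have hsup : (Finset.univ.image c).sup id = (Finset.univ : Finset (Fin n)) := by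
      ext x
      simp only [Finset.mem_sup, id]
      constructor
      · rintro ⟨b, -, -⟩
        exact Finset.mem_univ x
      · intro _
        obtain ⟨i, hi⟩ := (h3 x).1 (Finset.mem_univ x)
        exact ⟨c i, Finset.mem_image_of_mem c (Finset.mem_univ i), hi⟩
    let P : Finpartition (Finset.univ : Finset (Fin n)) :=
      { parts := Finset.univ.image c
        supIndep := by
          rw [Finset.supIndep_iff_pairwiseDisjoint]
          rintro b hb b' hb' hne
          simp only [Finset.coe_image, Set.mem_image] at hb hb'
          obtain ⟨i, -, rfl⟩ := hb
          obtain ⟨j, -, rfl⟩ := hb'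
          exact h2 i j (fun h => hne (by rw [h]))
        sup_parts := hsup
        bot_notMem := by
          simp only [Finset.bot_eq_empty, Finset.mem_image, Finset.mem_univ, true_and]
          rintro ⟨i, hi⟩
          exact hnotbot i hi }
    have hPparts : P.parts = Finset.univ.image c := rfl
    have hPk : P.parts.card = k := by
      rw [hPparts, Finset.card_image_of_injective _ hcinj, Finset.card_univ, Fintype.card_fin]
    have hPm : ∀ b ∈ P.parts, b.card ≤ m := by
      rw [hPparts]
      intro b hb
      obtain ⟨i, -, rfl⟩ := Finset.mem_image.1 hb
      exact (h1 i).2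
    let e0 : Fin k → ↥(P.parts) := fun i =>
      ⟨c i, by rw [hPparts]; exact Finset.mem_image_of_mem c (Finset.mem_univ i)⟩
    have he0 : Function.Bijective e0 := by
      constructor
      · intro i j h
        exact hcinj (Subtype.ext_iff.1 h)
      · rintro ⟨b, hb⟩
        rw [hPparts] at hb
        obtain ⟨i, -, rfl⟩ := Finset.mem_image.1 hb
        exact ⟨i, rfl⟩
    refine ⟨⟨⟨P, hPk, hPm⟩, Equiv.ofBijective e0 he0⟩, ?_⟩
    apply Subtype.ext
    funext i
    rfl
  have e := Equiv.ofBijective Ψ ⟨hinj, hsurj⟩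
  have hcard : ∀ P : PT, Fintype.card (Fin k ≃ ↥(P.1.parts)) = k.factorial := by
    intro P
    have hc : Fintype.card ↥(P.1.parts) = k := by
      rw [Fintype.card_coe, P.2.1]
    have e0 : Fin k ≃ ↥(P.1.parts) := (Fintype.equivFinOfCardEq hc).symm
    rw [Fintype.card_equiv e0, Fintype.card_fin]
  calc Ncnt m (Finset.univ : Finset (Fin n)) k
      = Nat.card (Σ P : PT, (Fin k ≃ ↥(P.1.parts))) := (Nat.card_congr e).symm
    _ = ∑ P : PT, Fintype.card (Fin k ≃ ↥(P.1.parts)) := by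
        rw [Nat.card_eq_fintype_card, Fintype.card_sigma]
    _ = ∑ _P : PT, k.factorial := Finset.sum_congr rfl (fun P _ => hcard P)
    _ = Fintype.card PT * k.factorial := by
        rw [Finset.sum_const, Finset.card_univ, smul_eq_mul]
    _ = k.factorial * restStirling m n k := by
        rw [restStirling, Nat.card_eq_fintype_card, mul_comm]

lemma gser_coeff_eq (m n k : ℕ) :
    PowerSeries.coeff n (gser m ^ k) =
      (k.factorial : ℚ) * restStirling m n k / n.factorial := by
  have h1 := Ncnt_formula m k (Finset.univ : Finset (Fin n))
  rw [Ncnt_eq_restStirling] at h1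
  rw [Finset.card_univ, Fintype.card_fin] at h1
  have hn : (n.factorial : ℚ) ≠ 0 := Nat.cast_ne_zero.2 (Nat.factorial_ne_zero n)
  rw [eq_div_iff hn, mul_comm _ (n.factorial : ℚ), ← h1]
  push_cast
  ring

theorem restPolyBernoulli_egf (μ m : ℕ) (hμ : 1 ≤ μ) (hm : 1 ≤ m) :
    PowerSeries.mk (fun n => restPolyBernoulli μ m n / n.factorial) *
        (1 - PowerSeries.rescale (-1 : ℚ) (Em m)) =
      Li μ (1 - PowerSeries.rescale (-1 : ℚ) (Em m)) := by
  set f : PowerSeries ℚ := 1 - PowerSeries.rescale (-1 : ℚ) (Em m) with hfdef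
  have hfg : f = (-1 : ℚ) • PowerSeries.rescale (-1 : ℚ) (gser m) := by
    ext j
    rw [hfdef, map_sub, PowerSeries.coeff_one, map_smul, smul_eq_mul,
      PowerSeries.coeff_rescale, PowerSeries.coeff_rescale]
    simp only [Em, gser, PowerSeries.coeff_mk]
    rcases j with _ | j
    · simp
    · have h1 : ¬ (j + 1 = 0) := Nat.succ_ne_zero j
      have h2 : 1 ≤ j + 1 := Nat.succ_le_succ (Nat.zero_le j)
      simp only [h1, if_false, h2, true_and]
      ring
  have hfk : ∀ a k, PowerSeries.coeff a (f ^ k) =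
      (-1 : ℚ) ^ (a + k) * PowerSeries.coeff a (gser m ^ k) := by
    intro a k
    rw [hfg, smul_pow, map_smul, smul_eq_mul, ← map_pow, PowerSeries.coeff_rescale, pow_add]
    ring
  have hconst : PowerSeries.constantCoeff f = 0 := by
    rw [← PowerSeries.coeff_zero_eq_constantCoeff_apply]
    have h01 := hfk 0 1
    rw [pow_one] at h01
    rw [h01]
    simp [gser]
  have hvanish : ∀ a k, a < k → PowerSeries.coeff a (f ^ k) = 0 := by
    intro a k h
    have hX : (PowerSeries.X : PowerSeries ℚ) ∣ f := PowerSeries.X_dvd_iff.2 hconst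
    have hXk : (PowerSeries.X : PowerSeries ℚ) ^ k ∣ f ^ k := pow_dvd_pow_of_dvd hX k
    exact PowerSeries.X_pow_dvd_iff.1 hXk a h
  have hB : ∀ a n : ℕ, a ≤ n → restPolyBernoulli μ m a / a.factorial =
      ∑ k ∈ Finset.range (n+1), PowerSeries.coeff a (f ^ k) / ((k : ℚ) + 1) ^ μ := by
    intro a n han
    have step1 : restPolyBernoulli μ m a / a.factorial =
        ∑ k ∈ Finset.range (a+1), PowerSeries.coeff a (f ^ k) / ((k : ℚ) + 1) ^ μ := by
      rw [restPolyBernoulli, Finset.sum_div]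
      refine Finset.sum_congr rfl ?_
      intro k hk
      have hka : k ≤ a := Nat.lt_succ_iff.1 (Finset.mem_range.1 hk)
      rw [hfk, gser_coeff_eq]
      have hsign : (-1 : ℚ) ^ (a + k) = (-1 : ℚ) ^ (a - k) := by
        have h2 : a + k = (a - k) + 2 * k := by omega
        rw [h2, pow_add, pow_mul]
        simp
      rw [hsign]
      ring
    rw [step1]
    refine Finset.sum_subset ?_ ?_
    · exact Finset.range_subset_range.2 (Nat.succ_le_succ han)
    · intro k hk hk2
      have hak : a < k := by
        have := Finset.mem_range.1 hk
        have h2 : ¬ k < a + 1 := fun hc => hk2 (Finset.mem_range.2 hc)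
        omega
      rw [hvanish a k hak, zero_div]
  ext n
  rw [PowerSeries.coeff_mul]
  have hstep : ∀ p ∈ Finset.HasAntidiagonal.antidiagonal n,
      PowerSeries.coeff p.1 (PowerSeries.mk fun n => restPolyBernoulli μ m n / n.factorial) *
          PowerSeries.coeff p.2 f =
        ∑ k ∈ Finset.range (n+1),
          PowerSeries.coeff p.1 (f ^ k) * PowerSeries.coeff p.2 f / ((k : ℚ) + 1) ^ μ := by
    intro p hp
    have hp1 : p.1 ≤ n := by
      have := Finset.HasAntidiagonal.mem_antidiagonal.1 hp
      omega
    rw [PowerSeries.coeff_mk, hB p.1 n hp1, Finset.sum_mul]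
    refine Finset.sum_congr rfl ?_
    intro k _
    rw [div_mul_eq_mul_div]
  rw [Finset.sum_congr rfl hstep, Finset.sum_comm]
  have hswap : ∀ k ∈ Finset.range (n+1),
      ∑ p ∈ Finset.HasAntidiagonal.antidiagonal n,
          PowerSeries.coeff p.1 (f ^ k) * PowerSeries.coeff p.2 f / ((k : ℚ) + 1) ^ μ =
        PowerSeries.coeff n (f ^ (k+1)) / ((k : ℚ) + 1) ^ μ := by
    intro k _
    rw [← Finset.sum_div, ← PowerSeries.coeff_mul, ← pow_succ]
  rw [Finset.sum_congr rfl hswap]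
  -- now identify with the Li side
  rw [Li, PowerSeries.coeff_mk]
  have hIcc : ∑ j ∈ Finset.Icc 1 n, PowerSeries.coeff n (f ^ j) / (j : ℚ) ^ μ =
      ∑ k ∈ Finset.range n, PowerSeries.coeff n (f ^ (1 + k)) / ((1 + k : ℕ) : ℚ) ^ μ := by
    rw [← Finset.Ico_add_one_right_eq_Icc, Finset.sum_Ico_eq_sum_range, Nat.add_sub_cancel]
  rw [hIcc]
  rw [Finset.sum_range_succ]
  have hlast : PowerSeries.coeff n (f ^ (n+1)) / ((n : ℚ) + 1) ^ μ = 0 := by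
    rw [hvanish n (n+1) (Nat.lt_succ_self n), zero_div]
  rw [hlast, add_zero]
  refine Finset.sum_congr rfl ?_
  intro k _
  have : ((1 + k : ℕ) : ℚ) = (k : ℚ) + 1 := by push_cast; ring
  rw [this, add_comm 1 k]
end
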